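/- arXiv:2603.27149 — 2 statements merged into one kernel-verified Lean document; each statement's English description precedes it below -/
import Mathlib

section
/- Let U ⊆ V ⊆ R^d be submodules and ≺ a monomial order on R^d. Let G_V = {g_1,…,g_t} be the reduced Gröbner basis of V relative to U, let G_U = {g_{t+1},…,g_s} be a Gröbner basis of U, and set G = G_V ∪ G_U. For all 1 ≤ i < j ≤ s with S(g_i, g_j) ≠ 0, choose a standard representation S(g_i, g_j) = Σ_{k=1}^s a_{ijk} g_k with lt(a_{ijk} g_k) ⪯ lt(S(g_i, g_j)), and define S_{ij} := (lcm(lm(g_i), lm(g_j))/lt(g_i)) e_i − (lcm(lm(g_i), lm(g_j))/lt(g_j)) e_j − Σ_{k=1}^s a_{ijk} e_k ∈ R^s. Let ψ : R^t → V/U be the R-linear map sending e_i to g_i + U, and let π : R^s → R^t be the projection onto the first t coordinates. Then the set H^{(1)} := {π(S_{ij}) : 1 ≤ i < j ≤ s, i ≤ t} is a Gröbner basis of ker(ψ) = Syz(g_1+U,…,g_t+U) with respect to the Schreyer order ≺_G restricted to module monomials X^α e_i with i ≤ t. -/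
attribute [local instance] Classical.propDecidable

noncomputable section

/-- Module monomial index: an exponent vector together with a component index. -/
abbrev ModMon (n d : ℕ) := (Fin n →₀ ℕ) × Fin d

/-- The free module `R^d` over `R = k[X_1, …, X_n]`. -/
abbrev FreeMod (k : Type*) [Field k] (n d : ℕ) := Fin d → MvPolynomial (Fin n) k

variable {k : Type*} [Field k] {n d : ℕ}

/-- The module monomial `X^α e_i` as an element of `R^d`. -/
def mmVec (m : ModMon n d) : FreeMod k n d :=
  Pi.single m.2 (MvPolynomial.monomial m.1 (1 : k))

/-- The support of `f ∈ R^d` as a finite set of module monomials. -/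
def suppF (f : FreeMod k n d) : Finset (ModMon n d) :=
  (Finset.univ : Finset (Fin d)).biUnion fun i =>
    ((f i).support.image fun a => ((a, i) : ModMon n d))

/-- A monomial order on `R^d`: a well-founded total order on module monomials such that
`e_i ⪯ X^α e_i` and which is compatible with multiplication by monomials. -/
structure ModMonOrder (n d : ℕ) where
  toOrd : LinearOrder (ModMon n d)
  wf : WellFounded toOrd.lt
  base_le : ∀ (i : Fin d) (a : Fin n →₀ ℕ), toOrd.le (0, i) (a, i)
  add_le : ∀ (a b c : Fin n →₀ ℕ) (i j : Fin d),
    toOrd.le (b, i) (c, j) → toOrd.le (a + b, i) (a + c, j)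

namespace ModMonOrder

variable (ord : ModMonOrder n d)

/-- The leading monomial of `f` (`⊥` if `f = 0`). -/
def lmo (f : FreeMod k n d) : WithBot (ModMon n d) :=
  letI := ord.toOrd
  (suppF f).max

/-- The order on leading monomials, extended to `WithBot` (with `⊥` smallest). -/
def leB (x y : WithBot (ModMon n d)) : Prop :=
  WithBot.recBotCoe True
    (fun a => WithBot.recBotCoe False (fun b => ord.toOrd.le a b) y) x

/-- The leading coefficient of `f` (`0` if `f = 0`). -/
def lc (f : FreeMod k n d) : k :=
  WithBot.recBotCoe 0 (fun m => (f m.2).coeff m.1) (ord.lmo f)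

/-- The leading monomial of `f`, as an element of `R^d` (`0` if `f = 0`). -/
def lmVec (f : FreeMod k n d) : FreeMod k n d :=
  WithBot.recBotCoe 0 (fun m => mmVec m) (ord.lmo f)

/-- `lm(W)`: the submodule generated by the leading monomials of nonzero elements of `W`. -/
def lmSub (W : Submodule (MvPolynomial (Fin n) k) (FreeMod k n d)) :
    Submodule (MvPolynomial (Fin n) k) (FreeMod k n d) :=
  Submodule.span (MvPolynomial (Fin n) k) {v | ∃ f ∈ W, f ≠ 0 ∧ v = ord.lmVec f}

end ModMonOrder

/-- Divisibility in `R^d`: `u` divides `v` iff `v = p • u` for some polynomial `p`. -/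
def dvdV (u v : FreeMod k n d) : Prop := ∃ p : MvPolynomial (Fin n) k, v = p • u

/-- `G` is a Gröbner basis of the submodule `W ⊆ R^d`. -/
def IsGB (ord : ModMonOrder n d) (W : Submodule (MvPolynomial (Fin n) k) (FreeMod k n d))
    (G : Finset (FreeMod k n d)) : Prop :=
  Submodule.span (MvPolynomial (Fin n) k) (G : Set (FreeMod k n d)) = W ∧
  Submodule.span (MvPolynomial (Fin n) k) (ord.lmVec '' (G : Set (FreeMod k n d))) = ord.lmSub W

/-- `G` is the reduced Gröbner basis of `W ⊆ R^d`. -/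
def IsRedGB (ord : ModMonOrder n d) (W : Submodule (MvPolynomial (Fin n) k) (FreeMod k n d))
    (G : Finset (FreeMod k n d)) : Prop :=
  IsGB ord W G ∧
  (∀ g ∈ G, ∀ g' ∈ G, g ≠ g' → ¬ dvdV (ord.lmVec g) (ord.lmVec g')) ∧
  ∀ g ∈ G, ord.lc g = 1 ∧ ∀ m ∈ suppF (g - ord.lmVec g), mmVec m ∉ ord.lmSub W

/-- `p` is a normal form of `f` modulo `U`: `f - p ∈ U` and `p` is supported on
module monomials outside `lm(U)`. -/
def IsNF (ord : ModMonOrder n d) (U : Submodule (MvPolynomial (Fin n) k) (FreeMod k n d))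
    (f p : FreeMod k n d) : Prop :=
  f - p ∈ U ∧ ∀ m ∈ suppF p, mmVec m ∉ ord.lmSub U

/-- `H` is a Gröbner basis of `V` relative to `U`. -/
def IsRelGB (ord : ModMonOrder n d) (U V : Submodule (MvPolynomial (Fin n) k) (FreeMod k n d))
    (H : Finset (FreeMod k n d)) : Prop :=
  (H : Set (FreeMod k n d)) ⊆ (V : Set (FreeMod k n d)) \ (U : Set (FreeMod k n d)) ∧
  (∀ h ∈ H, ∀ m ∈ suppF h, mmVec m ∉ ord.lmSub U) ∧
  Submodule.span (MvPolynomial (Fin n) k) (ord.lmVec '' (H : Set (FreeMod k n d))) ⊔ ord.lmSub U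
    = ord.lmSub V

/-- `H` is a minimal Gröbner basis of `V` relative to `U`. -/
def IsMinRelGB (ord : ModMonOrder n d) (U V : Submodule (MvPolynomial (Fin n) k) (FreeMod k n d))
    (H : Finset (FreeMod k n d)) : Prop :=
  IsRelGB ord U V H ∧
  ∀ h ∈ H, ∀ h' ∈ H, h ≠ h' → ¬ dvdV (ord.lmVec h) (ord.lmVec h')

/-- `H` is the reduced Gröbner basis of `V` relative to `U`. -/
def IsRedRelGB (ord : ModMonOrder n d) (U V : Submodule (MvPolynomial (Fin n) k) (FreeMod k n d))
    (H : Finset (FreeMod k n d)) : Prop :=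
  IsMinRelGB ord U V H ∧
  ∀ h ∈ H, ord.lc h = 1 ∧ ∀ m ∈ suppF (h - ord.lmVec h), mmVec m ∉ ord.lmSub V

end

noncomputable section
variable {k : Type*} [Field k] {n d : ℕ}

/-- The S-polynomial `S(f, g)` (0 if the leading monomials are in different components or
one of `f, g` is zero). -/
def sPoly (ord : ModMonOrder n d) (f g : FreeMod k n d) : FreeMod k n d :=
  WithBot.recBotCoe 0 (fun mf =>
    WithBot.recBotCoe 0 (fun mg =>
      if mf.2 = mg.2 then
        (MvPolynomial.monomial ((mf.1 ⊔ mg.1) - mf.1) (ord.lc f)⁻¹) • f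
          - (MvPolynomial.monomial ((mf.1 ⊔ mg.1) - mg.1) (ord.lc g)⁻¹) • g
      else 0) (ord.lmo g)) (ord.lmo f)

/-- The map `R^t → R^d`, `v ↦ ∑ i, v i • g i`. -/
def combMap {t : ℕ} (g : Fin t → FreeMod k n d) :
    FreeMod k n t →ₗ[MvPolynomial (Fin n) k] FreeMod k n d where
  toFun v := ∑ i, v i • g i
  map_add' v w := by simp [add_smul, Finset.sum_add_distrib]
  map_smul' c v := by simp [Finset.smul_sum, smul_smul]

/-- The Schreyer syzygy `S_{ij}` attached to a family `g` and chosen standard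
representations `a` of the S-polynomials. -/
def schreyerVec {s : ℕ} (ord : ModMonOrder n d) (g : Fin s → FreeMod k n d)
    (a : Fin s → Fin s → Fin s → MvPolynomial (Fin n) k) (i j : Fin s) :
    FreeMod k n s :=
  WithBot.recBotCoe 0 (fun mi =>
    WithBot.recBotCoe 0 (fun mj =>
      if mi.2 = mj.2 then
        Pi.single (M := fun _ : Fin s => MvPolynomial (Fin n) k) i
            (MvPolynomial.monomial ((mi.1 ⊔ mj.1) - mi.1) (ord.lc (g i))⁻¹)
          - Pi.single (M := fun _ : Fin s => MvPolynomial (Fin n) k) j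
            (MvPolynomial.monomial ((mi.1 ⊔ mj.1) - mj.1) (ord.lc (g j))⁻¹)
          - (fun l => a i j l)
      else 0) (ord.lmo (g j))) (ord.lmo (g i))

end

noncomputable section

variable {k : Type*} [Field k] {n d : ℕ}

namespace RelSchreyer

open MvPolynomial

variable {s t : ℕ} (ord : ModMonOrder n d)

lemma mem_suppF {f : FreeMod k n d} {m : ModMon n d} :
    m ∈ suppF f ↔ (f m.2).coeff m.1 ≠ 0 := by
  unfold suppF
  simp only [Finset.mem_biUnion, Finset.mem_univ, true_and, Finset.mem_image,
    MvPolynomial.mem_support_iff]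
  constructor
  · rintro ⟨i, a, ha, rfl⟩; exact ha
  · intro h; exact ⟨m.2, m.1, h, rfl⟩

lemma suppF_eq_empty {f : FreeMod k n d} : suppF f = ∅ ↔ f = 0 := by
  constructor
  · intro h; funext i; ext a
    have := Finset.eq_empty_iff_forall_notMem.1 h ((a, i) : ModMon n d)
    simpa [mem_suppF] using this
  · rintro rfl
    apply Finset.eq_empty_iff_forall_notMem.2
    intro m hm
    simp [mem_suppF] at hm

lemma lmo_eq_bot {f : FreeMod k n d} : ord.lmo f = ⊥ ↔ f = 0 := by
  letI := ord.toOrd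
  unfold ModMonOrder.lmo
  rw [Finset.max_eq_bot, suppF_eq_empty]

lemma lmo_mem {f : FreeMod k n d} {m : ModMon n d} (h : ord.lmo f = (m : WithBot (ModMon n d))) :
    m ∈ suppF f := by
  letI := ord.toOrd
  exact Finset.mem_of_max h

lemma coeff_lmo_ne_zero {f : FreeMod k n d} {m : ModMon n d}
    (h : ord.lmo f = (m : WithBot (ModMon n d))) : (f m.2).coeff m.1 ≠ 0 :=
  mem_suppF.1 (lmo_mem ord h)

lemma lc_eq {f : FreeMod k n d} {m : ModMon n d}
    (h : ord.lmo f = (m : WithBot (ModMon n d))) : ord.lc f = (f m.2).coeff m.1 := by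
  unfold ModMonOrder.lc; rw [h]; rfl

lemma le_of_mem_suppF {f : FreeMod k n d} {m m' : ModMon n d}
    (h : ord.lmo f = (m : WithBot (ModMon n d))) (h' : m' ∈ suppF f) :
    ord.toOrd.le m' m := by
  letI := ord.toOrd
  have h2 : (suppF f).max = ((m : WithBot (ModMon n d))) := h
  have := Finset.le_max h'
  rw [h2] at this
  exact_mod_cast this

lemma lmo_exists {f : FreeMod k n d} (hf : f ≠ 0) :
    ∃ m : ModMon n d, ord.lmo f = (m : WithBot (ModMon n d)) := by
  letI := ord.toOrd
  rcases Finset.max_of_nonempty (Finset.nonempty_iff_ne_empty.2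
    (fun h => hf (suppF_eq_empty.1 h))) with ⟨m, hm⟩
  exact ⟨m, hm⟩

lemma lmo_eq_of {f : FreeMod k n d} {m : ModMon n d} (hmem : m ∈ suppF f)
    (hle : ∀ m' ∈ suppF f, ord.toOrd.le m' m) : ord.lmo f = (m : WithBot (ModMon n d)) := by
  letI := ord.toOrd
  rcases lmo_exists ord (f := f) (fun h0 => by
    rw [h0] at hmem; simp [suppF_eq_empty.2 rfl] at hmem) with ⟨m0, hm0⟩
  rw [hm0]
  congr 1
  exact ord.toOrd.le_antisymm m0 m (hle m0 (lmo_mem ord hm0))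
    (le_of_mem_suppF ord hm0 hmem)


-- order helpers
lemma ltO_iff {x y : ModMon n d} : ord.toOrd.lt x y ↔ ord.toOrd.le x y ∧ x ≠ y :=
  @lt_iff_le_and_ne _ ord.toOrd.toPartialOrder x y

lemma not_leO {x y : ModMon n d} : ¬ ord.toOrd.le x y ↔ ord.toOrd.lt y x :=
  @not_le _ ord.toOrd x y

lemma leO_trans {x y z : ModMon n d} (h1 : ord.toOrd.le x y) (h2 : ord.toOrd.le y z) :
    ord.toOrd.le x z := ord.toOrd.le_trans x y z h1 h2

lemma add_ltO (a : Fin n →₀ ℕ) {b c : Fin n →₀ ℕ} {i j : Fin d}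
    (h : ord.toOrd.lt (b, i) (c, j)) : ord.toOrd.lt (a + b, i) (a + c, j) := by
  rw [ltO_iff] at h ⊢
  refine ⟨ord.add_le a b c i j h.1, fun he => h.2 ?_⟩
  have h1 : a + b = a + c := congrArg Prod.fst he
  have h2 : i = j := congrArg Prod.snd he
  exact Prod.ext (add_left_cancel h1) h2

lemma le_cancelO {a b c : Fin n →₀ ℕ} {i j : Fin d}
    (h : ord.toOrd.le (a + b, i) (a + c, j)) : ord.toOrd.le (b, i) (c, j) := by
  by_contra hn
  have hlt := add_ltO ord a ((not_leO ord).1 hn)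
  rw [ltO_iff] at hlt
  exact hlt.2 (ord.toOrd.le_antisymm _ _ hlt.1 h)


lemma smul_top (p : MvPolynomial (Fin n) k) {f : FreeMod k n d} {m : ModMon n d}
    (hp : p ≠ 0) (hlmo : ord.lmo f = (m : WithBot (ModMon n d))) :
    ∃ δ, δ ∈ p.support ∧
      (∀ δ' ∈ p.support, ord.toOrd.le (δ' + m.1, m.2) (δ + m.1, m.2)) ∧
      ord.lmo (p • f) = (((δ + m.1, m.2) : ModMon n d) : WithBot (ModMon n d)) ∧
      ord.lc (p • f) = p.coeff δ * ord.lc f := by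
  obtain ⟨δ, hδmem, hδmax⟩ := @Finset.exists_max_image (ModMon n d) (Fin n →₀ ℕ) ord.toOrd
    p.support (fun δ' => ((δ' + m.1, m.2) : ModMon n d))
    (Finset.nonempty_iff_ne_empty.2 (fun h => hp (MvPolynomial.support_eq_empty.1 h)))
  have key : ∀ (c : Fin d) (μ : Fin n →₀ ℕ) (x y : Fin n →₀ ℕ), x + y = μ →
      p.coeff x ≠ 0 → (f c).coeff y ≠ 0 →
      ord.toOrd.le ((μ, c) : ModMon n d) (δ + m.1, m.2) ∧
      (((μ, c) : ModMon n d) = (δ + m.1, m.2) → x = δ ∧ y = m.1 ∧ c = m.2) := by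
    intro c μ x y hxy hx hy
    have hx' : x ∈ p.support := MvPolynomial.mem_support_iff.2 hx
    have hy' : ((y, c) : ModMon n d) ∈ suppF f := mem_suppF.2 hy
    have h1 : ord.toOrd.le (x + y, c) (x + m.1, m.2) :=
      ord.add_le x _ _ _ _ (le_of_mem_suppF ord hlmo hy')
    have h2 : ord.toOrd.le (x + m.1, m.2) (δ + m.1, m.2) := hδmax x hx'
    constructor
    · rw [← hxy]; exact leO_trans ord h1 h2
    · intro he
      have h3 : ord.toOrd.le (δ + m.1, m.2) (x + m.1, m.2) := by
        rw [← he, ← hxy]; exact h1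
      have h4 : ((x + m.1, m.2) : ModMon n d) = (δ + m.1, m.2) :=
        ord.toOrd.le_antisymm _ _ h2 h3
      have hxδ : x = δ := add_right_cancel (congrArg Prod.fst h4)
      refine ⟨hxδ, ?_, congrArg Prod.snd he⟩
      rw [hxδ] at hxy
      have : δ + y = δ + m.1 := by rw [hxy]; exact congrArg Prod.fst he
      exact add_left_cancel this
  have hcoeff : ((p • f) m.2).coeff (δ + m.1) = p.coeff δ * ord.lc f := by
    have hexp : (p • f) m.2 = p * f m.2 := rfl
    rw [hexp, MvPolynomial.coeff_mul]
    rw [Finset.sum_eq_single ((δ, m.1) : (Fin n →₀ ℕ) × (Fin n →₀ ℕ))]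
    · rw [lc_eq ord hlmo]
    · rintro ⟨x, y⟩ hbmem hbne
      by_cases hx : p.coeff x = 0
      · rw [hx, zero_mul]
      by_cases hy : (f m.2).coeff y = 0
      · rw [hy, mul_zero]
      exfalso
      obtain ⟨hx', hy', _⟩ := (key m.2 (δ + m.1) x y
        (Finset.HasAntidiagonal.mem_antidiagonal.1 hbmem) hx hy).2 rfl
      exact hbne (by rw [hx', hy'])
    · intro hnot
      exfalso
      apply hnot
      rw [Finset.HasAntidiagonal.mem_antidiagonal]
  have htopmem : ((δ + m.1, m.2) : ModMon n d) ∈ suppF (p • f) := by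
    rw [mem_suppF]
    simp only [hcoeff]
    exact mul_ne_zero (MvPolynomial.mem_support_iff.1 hδmem)
      (by rw [lc_eq ord hlmo]; exact coeff_lmo_ne_zero ord hlmo)
  have hbound : ∀ m'' ∈ suppF (p • f), ord.toOrd.le m'' (δ + m.1, m.2) := by
    intro m'' hm''
    rw [mem_suppF] at hm''
    have hexp : (p • f) m''.2 = p * f m''.2 := rfl
    rw [hexp, MvPolynomial.coeff_mul] at hm''
    obtain ⟨⟨x, y⟩, hbmem, hbne⟩ := Finset.exists_ne_zero_of_sum_ne_zero hm''
    have hx : p.coeff x ≠ 0 := fun h0 => hbne (by rw [h0, zero_mul])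
    have hy : (f m''.2).coeff y ≠ 0 := fun h0 => hbne (by rw [h0, mul_zero])
    have := (key m''.2 m''.1 x y (Finset.HasAntidiagonal.mem_antidiagonal.1 hbmem) hx hy).1
    exact this
  have hlmo' := lmo_eq_of ord htopmem hbound
  exact ⟨δ, hδmem, hδmax, hlmo', by rw [lc_eq ord hlmo']; exact hcoeff⟩


lemma smul_monomial_top {β : Fin n →₀ ℕ} {c : k} {f : FreeMod k n d} {m : ModMon n d}
    (hc : c ≠ 0) (hlmo : ord.lmo f = (m : WithBot (ModMon n d))) :
    ord.lmo ((MvPolynomial.monomial β c) • f)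
        = (((β + m.1, m.2) : ModMon n d) : WithBot (ModMon n d)) ∧
      ord.lc ((MvPolynomial.monomial β c) • f) = c * ord.lc f := by
  obtain ⟨δ, hδmem, _, hlmo', hlc'⟩ := smul_top ord (MvPolynomial.monomial β c)
    (by simp [MvPolynomial.monomial_eq_zero, hc]) hlmo
  have hδ : δ = β := by
    rw [MvPolynomial.support_monomial, if_neg hc] at hδmem
    exact Finset.mem_singleton.1 hδmem
  subst hδ
  refine ⟨hlmo', ?_⟩
  rw [hlc', MvPolynomial.coeff_monomial, if_pos rfl]

lemma suppF_sub_lt {f h : FreeMod k n d} {M : ModMon n d}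
    (hf : ∀ m ∈ suppF f, ord.toOrd.le m M) (hh : ∀ m ∈ suppF h, ord.toOrd.le m M)
    (hc : (f M.2).coeff M.1 = (h M.2).coeff M.1) :
    ∀ m ∈ suppF (f - h), ord.toOrd.lt m M := by
  intro m hm
  rw [mem_suppF] at hm
  have hexp : ((f - h) m.2).coeff m.1 = (f m.2).coeff m.1 - (h m.2).coeff m.1 := by
    simp [Pi.sub_apply]
  rw [hexp] at hm
  have hne : (f m.2).coeff m.1 ≠ (h m.2).coeff m.1 := fun he => hm (by rw [he]; ring)
  have hle : ord.toOrd.le m M := by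
    by_cases h0 : (f m.2).coeff m.1 = 0
    · exact hh m (mem_suppF.2 (fun hz => hne (by rw [h0, hz])))
    · exact hf m (mem_suppF.2 h0)
  rw [ltO_iff]
  refine ⟨hle, fun he => hne ?_⟩
  subst he; exact hc

lemma mmVec_apply (m : ModMon n d) (c : Fin d) :
    (mmVec m : FreeMod k n d) c
      = if c = m.2 then MvPolynomial.monomial m.1 (1 : k) else 0 := by
  unfold mmVec; exact Pi.single_apply _ _ _

lemma suppF_mmVec (m : ModMon n d) : suppF (mmVec m : FreeMod k n d) = {m} := by
  ext m'
  rw [mem_suppF, Finset.mem_singleton, mmVec_apply]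
  by_cases h2 : m'.2 = m.2
  · rw [if_pos h2, MvPolynomial.coeff_monomial]
    constructor
    · intro h
      by_cases h1 : m.1 = m'.1
      · exact Prod.ext h1.symm h2
      · rw [if_neg h1] at h; simp at h
    · rintro rfl; simp
  · rw [if_neg h2]
    simp only [MvPolynomial.coeff_zero, ne_eq, not_true_eq_false, false_iff]
    intro he; exact h2 (congrArg Prod.snd he)

lemma mmVec_ne_zero (m : ModMon n d) : (mmVec m : FreeMod k n d) ≠ 0 := by
  intro h
  have := suppF_mmVec (k := k) m
  rw [h, suppF_eq_empty.2 rfl] at this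
  exact absurd this.symm (Finset.singleton_ne_empty m)

lemma mmVec_inj {m m' : ModMon n d} (h : (mmVec m : FreeMod k n d) = mmVec m') : m = m' := by
  have h1 := suppF_mmVec (k := k) m
  rw [h, suppF_mmVec] at h1
  exact (Finset.singleton_inj.1 h1).symm

lemma lmo_mmVec (m : ModMon n d) :
    ord.lmo (mmVec m : FreeMod k n d) = (m : WithBot (ModMon n d)) :=
  lmo_eq_of ord (by rw [suppF_mmVec]; exact Finset.mem_singleton_self m)
    (by intro m' hm'
        rw [suppF_mmVec, Finset.mem_singleton] at hm'
        rw [hm']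
        exact ord.toOrd.le_refl m)

lemma mmVec_dvd {m' m : ModMon n d} (h2 : m'.2 = m.2) (h1 : m'.1 ≤ m.1) :
    (MvPolynomial.monomial (m.1 - m'.1) (1 : k)) • (mmVec m' : FreeMod k n d) = mmVec m := by
  funext c
  have hexp : ((MvPolynomial.monomial (m.1 - m'.1) (1 : k)) • (mmVec m' : FreeMod k n d)) c
      = (MvPolynomial.monomial (m.1 - m'.1) (1 : k)) * (mmVec m' : FreeMod k n d) c := rfl
  rw [hexp, mmVec_apply, mmVec_apply, h2]
  by_cases hc : c = m.2
  · rw [if_pos hc, if_pos hc, MvPolynomial.monomial_mul, one_mul,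
      tsub_add_cancel_of_le h1]
  · rw [if_neg hc, if_neg hc, mul_zero]


lemma lmVec_eq {f : FreeMod k n d} {m : ModMon n d}
    (h : ord.lmo f = (m : WithBot (ModMon n d))) : ord.lmVec f = mmVec m := by
  unfold ModMonOrder.lmVec; rw [h]; rfl

lemma lmVec_eq_zero {f : FreeMod k n d} (h : f = 0) : ord.lmVec f = 0 := by
  unfold ModMonOrder.lmVec
  rw [(lmo_eq_bot ord).2 h]
  rfl

lemma lmVec_mem_lmSub {W : Submodule (MvPolynomial (Fin n) k) (FreeMod k n d)}
    {f : FreeMod k n d} (hf : f ∈ W) (h0 : f ≠ 0) : ord.lmVec f ∈ ord.lmSub W :=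
  Submodule.subset_span ⟨f, hf, h0, rfl⟩

lemma span_monomials_dvd {S : Set (FreeMod k n d)}
    (hS : ∀ u ∈ S, u = 0 ∨ ∃ m', u = mmVec m') {m : ModMon n d}
    (hm : (mmVec m : FreeMod k n d) ∈ Submodule.span (MvPolynomial (Fin n) k) S) :
    ∃ m' : ModMon n d, (mmVec m' : FreeMod k n d) ∈ S ∧ m'.2 = m.2 ∧ m'.1 ≤ m.1 := by
  by_contra hcon
  push_neg at hcon
  obtain ⟨c, hsupp, hsum⟩ := Submodule.mem_span_set.1 hm
  have h1 : (((mmVec m : FreeMod k n d) m.2).coeff m.1) = 1 := by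
    rw [mmVec_apply, if_pos rfl, MvPolynomial.coeff_monomial, if_pos rfl]
  have h2 : (((c.sum fun mi r => r • mi) : FreeMod k n d) m.2).coeff m.1 = 0 := by
    rw [Finsupp.sum]
    have hap : ((∑ u ∈ c.support, c u • u) m.2) = ∑ u ∈ c.support, (c u • u) m.2 :=
      Finset.sum_apply _ _ _
    rw [hap, MvPolynomial.coeff_sum]
    apply Finset.sum_eq_zero
    intro u hu
    rcases hS u (hsupp hu) with h0 | ⟨m', rfl⟩
    · rw [h0, smul_zero]; rfl
    · have hexp : ((c (mmVec m') • (mmVec m' : FreeMod k n d)) m.2)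
          = c (mmVec m') * (mmVec m' : FreeMod k n d) m.2 := rfl
      rw [hexp, mmVec_apply]
      by_cases h2' : m.2 = m'.2
      · rw [if_pos h2', MvPolynomial.coeff_mul_monomial']
        have : ¬ m'.1 ≤ m.1 := fun hle => hcon m' (hsupp hu) h2'.symm hle
        rw [if_neg this]
      · rw [if_neg h2', mul_zero]
        rfl
  rw [hsum] at h2
  rw [h2] at h1
  exact one_ne_zero h1.symm


lemma leB_coe_coe {x y : ModMon n d} :
    ord.leB (x : WithBot (ModMon n d)) (y : WithBot (ModMon n d)) ↔ ord.toOrd.le x y := by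
  simp [ModMonOrder.leB]

lemma not_leB_coe_bot {x : ModMon n d} : ¬ ord.leB (x : WithBot (ModMon n d)) ⊥ := by
  simp [ModMonOrder.leB]

lemma le_lt_transO {x y z : ModMon n d} (h : ord.toOrd.le x y) (h' : ord.toOrd.lt y z) :
    ord.toOrd.lt x z :=
  @lt_of_le_of_lt _ ord.toOrd.toPartialOrder.toPreorder _ _ _ h h'

lemma ne_zero_of_lmo {f : FreeMod k n d} {m : ModMon n d}
    (h : ord.lmo f = (m : WithBot (ModMon n d))) : f ≠ 0 := by
  intro h0
  rw [(lmo_eq_bot ord).2 h0] at h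
  exact (WithBot.bot_ne_coe).elim (by exact h)

lemma lc_ne_zero {f : FreeMod k n d} {m : ModMon n d}
    (h : ord.lmo f = (m : WithBot (ModMon n d))) : ord.lc f ≠ 0 := by
  rw [lc_eq ord h]
  exact coeff_lmo_ne_zero ord h


section SLM

variable (hts : t ≤ s) (g : Fin s → FreeMod k n d)
  (a : Fin s → Fin s → Fin s → MvPolynomial (Fin n) k)
  (ordS : ModMonOrder n t)

theorem schreyer_lm
    (hordS : ∀ (α β : Fin n →₀ ℕ) (i j : Fin t) (mi mj : ModMon n d),
      ord.lmo (g (Fin.castLE hts i)) = (mi : WithBot (ModMon n d)) →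
      ord.lmo (g (Fin.castLE hts j)) = (mj : WithBot (ModMon n d)) →
      (ordS.toOrd.lt (α, i) (β, j) ↔
        ord.toOrd.lt (α + mi.1, mi.2) (β + mj.1, mj.2) ∨
          ((α + mi.1, mi.2) = (β + mj.1, mj.2) ∧ j < i)))
    (hg0 : ∀ l : Fin t, g (Fin.castLE hts l) ≠ 0)
    {i j : Fin s} (hij : i < j) (hit : i.val < t) 
    {mi mj : ModMon n d} (hmi : ord.lmo (g i) = (mi : WithBot (ModMon n d)))
    (hmj : ord.lmo (g j) = (mj : WithBot (ModMon n d)))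
    (hcomp : mi.2 = mj.2)
    (hrep : sPoly ord (g i) (g j) = ∑ l, a i j l • g l)
    (hstd : ∀ l, ord.leB (ord.lmo (a i j l • g l)) (ord.lmo (sPoly ord (g i) (g j)))) :
    ordS.lmo (fun l : Fin t => schreyerVec ord g a i j (Fin.castLE hts l))
        = ((((mi.1 ⊔ mj.1) - mi.1, ⟨i.val, hit⟩) : ModMon n t) : WithBot (ModMon n t)) ∧
      ordS.lc (fun l : Fin t => schreyerVec ord g a i j (Fin.castLE hts l))
        = (ord.lc (g i))⁻¹ := by
  set γ : Fin n →₀ ℕ := mi.1 ⊔ mj.1 with hγ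
  set c : Fin d := mi.2 with hcdef
  set qi : MvPolynomial (Fin n) k := MvPolynomial.monomial (γ - mi.1) (ord.lc (g i))⁻¹ with hqi
  set qj : MvPolynomial (Fin n) k := MvPolynomial.monomial (γ - mj.1) (ord.lc (g j))⁻¹ with hqj
  have hlci : ord.lc (g i) ≠ 0 := lc_ne_zero ord hmi
  have hlcj : ord.lc (g j) ≠ 0 := lc_ne_zero ord hmj
  have hsv : schreyerVec ord g a i j
      = Pi.single (M := fun _ : Fin s => MvPolynomial (Fin n) k) i qi
        - Pi.single (M := fun _ : Fin s => MvPolynomial (Fin n) k) j qj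
        - (fun l => a i j l) := by
    rw [schreyerVec, hmi, hmj]
    simp only [WithBot.recBotCoe_coe]
    rw [if_pos hcomp]
  have hsp : sPoly ord (g i) (g j) = qi • g i - qj • g j := by
    rw [sPoly, hmi, hmj]
    simp only [WithBot.recBotCoe_coe]
    rw [if_pos hcomp]
  have hmiγ : mi.1 ≤ γ := le_sup_left
  have hmjγ : mj.1 ≤ γ := le_sup_right
  have htqi := smul_monomial_top ord (β := γ - mi.1) (inv_ne_zero hlci) hmi
  have htqj := smul_monomial_top ord (β := γ - mj.1) (inv_ne_zero hlcj) hmj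
  have hexpi : γ - mi.1 + mi.1 = γ := tsub_add_cancel_of_le hmiγ
  have hexpj : γ - mj.1 + mj.1 = γ := tsub_add_cancel_of_le hmjγ
  have hlmoqi : ord.lmo (qi • g i) = (((γ, c) : ModMon n d) : WithBot (ModMon n d)) := by
    rw [htqi.1, hexpi]
  have hlmoqj : ord.lmo (qj • g j) = (((γ, c) : ModMon n d) : WithBot (ModMon n d)) := by
    rw [htqj.1, hexpj, hcomp]
  have hlcqi : ord.lc (qi • g i) = 1 := by rw [htqi.2, inv_mul_cancel₀ hlci]
  have hlcqj : ord.lc (qj • g j) = 1 := by rw [htqj.2, inv_mul_cancel₀ hlcj]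
  -- all monomials of the S-polynomial are < (γ, c)
  have hSbound : ∀ m ∈ suppF (sPoly ord (g i) (g j)),
      ord.toOrd.lt m ((γ, c) : ModMon n d) := by
    rw [hsp]
    apply suppF_sub_lt ord
    · exact fun m hm => le_of_mem_suppF ord hlmoqi hm
    · exact fun m hm => le_of_mem_suppF ord hlmoqj hm
    · rw [← lc_eq ord hlmoqi, ← lc_eq ord hlmoqj, hlcqi, hlcqj]
  -- all monomials of the standard representation coefficients are small
  have claimA : ∀ (w : Fin s), g w ≠ 0 → ∀ (mw : ModMon n d),
      ord.lmo (g w) = (mw : WithBot (ModMon n d)) →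
      ∀ δ ∈ (a i j w).support, ord.toOrd.lt ((δ + mw.1, mw.2) : ModMon n d) ((γ, c)) := by
    intro w hw mw hmw δ hδ
    have haw : a i j w ≠ 0 := by
      intro h0; rw [h0] at hδ; simp at hδ
    obtain ⟨δ0, hδ0mem, hδ0max, hlmo0, _⟩ := smul_top ord (a i j w) haw hmw
    have h1 : ord.toOrd.le (δ + mw.1, mw.2) (δ0 + mw.1, mw.2) := hδ0max δ hδ
    have hstdw := hstd w
    cases hSP : ord.lmo (sPoly ord (g i) (g j)) with
    | bot =>
      rw [hlmo0, hSP] at hstdw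
      exact absurd hstdw (not_leB_coe_bot ord)
    | coe ms =>
      have h2 : ord.toOrd.lt ms ((γ, c) : ModMon n d) :=
        hSbound ms (lmo_mem ord hSP)
      rw [hlmo0, hSP, leB_coe_coe] at hstdw
      exact le_lt_transO ord (leO_trans ord h1 hstdw) h2
  -- entries of the projected Schreyer vector
  have hentry : ∀ l : Fin t, schreyerVec ord g a i j (Fin.castLE hts l)
      = (if Fin.castLE hts l = i then qi else 0)
        - (if Fin.castLE hts l = j then qj else 0) - a i j (Fin.castLE hts l) := by
    intro l
    rw [hsv]
    simp only [Pi.sub_apply, Pi.single_apply]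
  set ltop : Fin t := ⟨i.val, hit⟩ with hltop
  have hcast : Fin.castLE hts ltop = i := by
    apply Fin.ext; rfl
  have hcnei : Fin.castLE hts ltop ≠ j := by
    rw [hcast]; exact Fin.ne_of_lt hij
  have htopcoeff : (schreyerVec ord g a i j (Fin.castLE hts ltop)).coeff (γ - mi.1)
      = (ord.lc (g i))⁻¹ := by
    rw [hentry, if_pos hcast, if_neg hcnei, sub_zero]
    rw [MvPolynomial.coeff_sub, hqi, MvPolynomial.coeff_monomial, if_pos rfl]
    have hz : (a i j (Fin.castLE hts ltop)).coeff (γ - mi.1) = 0 := by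
      by_contra hnz
      have hδ : γ - mi.1 ∈ (a i j (Fin.castLE hts ltop)).support :=
        MvPolynomial.mem_support_iff.2 hnz
      rw [hcast] at hδ
      have := claimA i (ne_zero_of_lmo ord hmi) mi hmi (γ - mi.1) hδ
      rw [hexpi] at this
      exact (ltO_iff ord).1 this |>.2 rfl
    rw [hz, sub_zero]
  set h : FreeMod k n t := fun l : Fin t => schreyerVec ord g a i j (Fin.castLE hts l)
    with hh
  have htopmem : (((γ - mi.1, ltop) : ModMon n t)) ∈ suppF h := by
    rw [mem_suppF]
    exact htopcoeff ▸ inv_ne_zero hlci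
  have hbound : ∀ mm ∈ suppF h, ordS.toOrd.le mm ((γ - mi.1, ltop) : ModMon n t) := by
    rintro ⟨δ, l⟩ hmm
    rw [mem_suppF] at hmm
    simp only at hmm
    have hmm' : (h l).coeff δ ≠ 0 := hmm
    rw [hh] at hmm'
    simp only at hmm'
    rw [hentry l] at hmm'
    have hone : ((if Fin.castLE hts l = i then qi else 0)).coeff δ ≠ 0
        ∨ ((if Fin.castLE hts l = j then qj else 0)).coeff δ ≠ 0
        ∨ (a i j (Fin.castLE hts l)).coeff δ ≠ 0 := by
      by_contra hcon
      push_neg at hcon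
      obtain ⟨h1, h2, h3⟩ := hcon
      apply hmm'
      rw [MvPolynomial.coeff_sub, MvPolynomial.coeff_sub, h1, h2, h3]
      ring
    obtain ⟨mll, hmll⟩ := lmo_exists ord (hg0 l)
    rcases hone with h1 | h2 | h3
    · have hli : Fin.castLE hts l = i := by
        by_contra hne
        rw [if_neg hne] at h1
        exact h1 rfl
      rw [if_pos hli, hqi, MvPolynomial.coeff_monomial] at h1
      have hδe : γ - mi.1 = δ := by
        by_contra hne
        rw [if_neg hne] at h1
        exact h1 rfl
      have hle : l = ltop := by
        apply Fin.ext
        have : (Fin.castLE hts l).val = i.val := by rw [hli]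
        exact this
      rw [← hδe, hle]
      exact ordS.toOrd.le_refl _
    · have hlj : Fin.castLE hts l = j := by
        by_contra hne
        rw [if_neg hne] at h2
        exact h2 rfl
      rw [if_pos hlj, hqj, MvPolynomial.coeff_monomial] at h2
      have hδe : γ - mj.1 = δ := by
        by_contra hne
        rw [if_neg hne] at h2
        exact h2 rfl
      have hlml : ord.lmo (g (Fin.castLE hts l)) = (mj : WithBot (ModMon n d)) := by
        rw [hlj]; exact hmj
      have hlmtop : ord.lmo (g (Fin.castLE hts ltop)) = (mi : WithBot (ModMon n d)) := by
        rw [hcast]; exact hmi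
      have hlt : ordS.toOrd.lt (δ, l) ((γ - mi.1, ltop) : ModMon n t) := by
        rw [hordS δ (γ - mi.1) l ltop mj mi hlml hlmtop]
        right
        constructor
        · rw [← hδe, hexpj, hexpi]
          show ((γ, mj.2) : ModMon n d) = ((γ, mi.2) : ModMon n d)
          rw [← hcomp, hcdef]
        · show ltop.val < l.val
          have : l.val = j.val := by rw [← hlj]; rfl
          rw [this]
          exact hij
      exact ((ltO_iff ordS).1 hlt).1
    · have hδs : δ ∈ (a i j (Fin.castLE hts l)).support :=
        MvPolynomial.mem_support_iff.2 h3
      have hkey := claimA (Fin.castLE hts l) (hg0 l) mll hmll δ hδs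
      have hlmtop : ord.lmo (g (Fin.castLE hts ltop)) = (mi : WithBot (ModMon n d)) := by
        rw [hcast]; exact hmi
      have hlt : ordS.toOrd.lt (δ, l) ((γ - mi.1, ltop) : ModMon n t) := by
        rw [hordS δ (γ - mi.1) l ltop mll mi hmll hlmtop]
        left
        rw [hexpi]
        exact hkey
      exact ((ltO_iff ordS).1 hlt).1
  have hlmo' := lmo_eq_of ordS htopmem hbound
  exact ⟨hlmo', by rw [lc_eq ordS hlmo']; exact htopcoeff⟩

theorem key_divisor
    (hordS : ∀ (α β : Fin n →₀ ℕ) (i j : Fin t) (mi mj : ModMon n d),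
      ord.lmo (g (Fin.castLE hts i)) = (mi : WithBot (ModMon n d)) →
      ord.lmo (g (Fin.castLE hts j)) = (mj : WithBot (ModMon n d)) →
      (ordS.toOrd.lt (α, i) (β, j) ↔
        ord.toOrd.lt (α + mi.1, mi.2) (β + mj.1, mj.2) ∨
          ((α + mi.1, mi.2) = (β + mj.1, mj.2) ∧ j < i)))
    (hg0 : ∀ l : Fin t, g (Fin.castLE hts l) ≠ 0)
    (ha : ∀ i j : Fin s, i < j →
      sPoly ord (g i) (g j) = ∑ l, a i j l • g l ∧
        ∀ l, ord.leB (ord.lmo (a i j l • g l)) (ord.lmo (sPoly ord (g i) (g j))))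
    (U : Submodule (MvPolynomial (Fin n) k) (FreeMod k n d))
    (hGU2 : Submodule.span (MvPolynomial (Fin n) k)
        (ord.lmVec '' ((((Finset.univ : Finset (Fin s)).filter
          fun i : Fin s => t ≤ i.val).image g : Finset (FreeMod k n d)) : Set (FreeMod k n d)))
      = ord.lmSub U)
    {v : FreeMod k n t}
    (hvU : (∑ l : Fin t, v l • g (Fin.castLE hts l)) ∈ U)
    {mtv : ModMon n t} (hmtv : ordS.lmo v = (mtv : WithBot (ModMon n t))) :
    ∃ p : Fin s × Fin s, p.1 < p.2 ∧ p.1.val < t ∧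
      ∃ m' : ModMon n t,
        ordS.lmo (fun l : Fin t => schreyerVec ord g a p.1 p.2 (Fin.castLE hts l))
          = (m' : WithBot (ModMon n t)) ∧
        ordS.lc (fun l : Fin t => schreyerVec ord g a p.1 p.2 (Fin.castLE hts l))
          = (ord.lc (g p.1))⁻¹ ∧
        m'.2 = mtv.2 ∧ m'.1 ≤ mtv.1 := by
  classical
  obtain ⟨α, i0⟩ := mtv
  have hml : ∀ l : Fin t, ∃ mm : ModMon n d,
      ord.lmo (g (Fin.castLE hts l)) = (mm : WithBot (ModMon n d)) :=
    fun l => lmo_exists ord (hg0 l)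
  choose ml hmlp using hml
  set mi : ModMon n d := ml i0 with hmidef
  set M : ModMon n d := (α + mi.1, mi.2) with hMdef
  have hit : (Fin.castLE hts i0).val < t := i0.isLt
  -- the common finishing move
  have finish : ∀ (j : Fin s) (mjX : ModMon n d), Fin.castLE hts i0 < j →
      ord.lmo (g j) = (mjX : WithBot (ModMon n d)) → mi.2 = mjX.2 →
      mi.1 ⊔ mjX.1 ≤ α + mi.1 →
      ∃ p : Fin s × Fin s, p.1 < p.2 ∧ p.1.val < t ∧
      ∃ m' : ModMon n t,
        ordS.lmo (fun l : Fin t => schreyerVec ord g a p.1 p.2 (Fin.castLE hts l))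
          = (m' : WithBot (ModMon n t)) ∧
        ordS.lc (fun l : Fin t => schreyerVec ord g a p.1 p.2 (Fin.castLE hts l))
          = (ord.lc (g p.1))⁻¹ ∧
        m'.2 = ((α, i0) : ModMon n t).2 ∧ m'.1 ≤ ((α, i0) : ModMon n t).1 := by
    intro j mjX hij hmjX hcomp hγle
    obtain ⟨hrep, hstd⟩ := ha (Fin.castLE hts i0) j hij
    obtain ⟨hlmoS, hlcS⟩ := schreyer_lm ord hts g a ordS hordS hg0 hij hit
      (hmlp i0) hmjX hcomp hrep hstd
    refine ⟨(Fin.castLE hts i0, j), hij, hit, (mi.1 ⊔ mjX.1 - mi.1, ⟨(Fin.castLE hts i0).val, hit⟩),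
      hlmoS, hlcS, ?_, ?_⟩
    · exact Fin.ext rfl
    · exact tsub_le_iff_right.2 hγle
  -- claim (a)
  have hclaim : ∀ (l : Fin t) (δ : Fin n →₀ ℕ), (v l).coeff δ ≠ 0 →
      ord.toOrd.le ((δ + (ml l).1, (ml l).2)) M ∧
      (((δ + (ml l).1, (ml l).2) : ModMon n d) = M → l = i0 ∨ i0 < l) := by
    intro l δ hδ
    have hmem : ((δ, l) : ModMon n t) ∈ suppF v := mem_suppF.2 hδ
    have hle := le_of_mem_suppF ordS hmtv hmem
    by_cases heq : ((δ, l) : ModMon n t) = (α, i0)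
    · have h1 : δ = α := congrArg Prod.fst heq
      have h2 : l = i0 := congrArg Prod.snd heq
      subst h1; subst h2
      exact ⟨ord.toOrd.le_refl M, fun _ => Or.inl rfl⟩
    · have hlt : ordS.toOrd.lt (δ, l) ((α, i0) : ModMon n t) :=
        (ltO_iff ordS).2 ⟨hle, heq⟩
      rw [hordS δ α l i0 (ml l) (ml i0) (hmlp l) (hmlp i0)] at hlt
      rcases hlt with hlt | ⟨heq2, hlt2⟩
      · exact ⟨((ltO_iff ord).1 hlt).1, fun he => absurd he (((ltO_iff ord).1 hlt).2)⟩
      · exact ⟨heq2 ▸ ord.toOrd.le_refl _, fun _ => Or.inr hlt2⟩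
  by_cases hA : ∃ (l : Fin t) (δ : Fin n →₀ ℕ), l ≠ i0 ∧ (v l).coeff δ ≠ 0 ∧
      ((δ + (ml l).1, (ml l).2) : ModMon n d) = M
  · -- Case A
    obtain ⟨l, δ, hlne, hδne, hkey⟩ := hA
    have hi0l : i0 < l := by
      rcases (hclaim l δ hδne).2 hkey with h | h
      · exact absurd h hlne
      · exact h
    have hij : Fin.castLE hts i0 < Fin.castLE hts l := by
      show (Fin.castLE hts i0).val < (Fin.castLE hts l).val
      exact hi0l
    have hcomp : mi.2 = (ml l).2 := (congrArg Prod.snd hkey).symm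
    have hγle : mi.1 ⊔ (ml l).1 ≤ α + mi.1 := by
      apply sup_le
      · exact self_le_add_left mi.1 α
      · have : δ + (ml l).1 = α + mi.1 := congrArg Prod.fst hkey
        rw [← this]
        exact self_le_add_left (ml l).1 δ
    exact finish (Fin.castLE hts l) (ml l) hij (hmlp l) hcomp hγle
  · -- Case B
    push_neg at hA
    set f : FreeMod k n d := ∑ l : Fin t, v l • g (Fin.castLE hts l) with hfdef
    -- decompositions of nonzero coefficients of the products
    have hdecomp : ∀ (l : Fin t) (mm : ModMon n d),
        ((v l • g (Fin.castLE hts l)) mm.2).coeff mm.1 ≠ 0 →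
        ∃ x y, x + y = mm.1 ∧ (v l).coeff x ≠ 0 ∧
          ((g (Fin.castLE hts l)) mm.2).coeff y ≠ 0 := by
      intro l mm hne
      have hexp : (v l • g (Fin.castLE hts l)) mm.2 = v l * (g (Fin.castLE hts l)) mm.2 := rfl
      rw [hexp, MvPolynomial.coeff_mul] at hne
      obtain ⟨⟨x, y⟩, hbmem, hbne⟩ := Finset.exists_ne_zero_of_sum_ne_zero hne
      exact ⟨x, y, Finset.HasAntidiagonal.mem_antidiagonal.1 hbmem,
        fun h0 => hbne (by rw [h0, zero_mul]),
        fun h0 => hbne (by rw [h0, mul_zero])⟩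
    have hchain : ∀ (l : Fin t) (x y : Fin n →₀ ℕ) (c : Fin d),
        (v l).coeff x ≠ 0 → ((g (Fin.castLE hts l)) c).coeff y ≠ 0 →
        ord.toOrd.le ((x + y, c) : ModMon n d) ((x + (ml l).1, (ml l).2)) := by
      intro l x y c hx hy
      have hy' : ((y, c) : ModMon n d) ∈ suppF (g (Fin.castLE hts l)) := mem_suppF.2 hy
      exact ord.add_le x _ _ _ _ (le_of_mem_suppF ord (hmlp l) hy')
    -- the coefficient of f at M
    have hfapp : ∀ mm : ModMon n d, (f mm.2).coeff mm.1
        = ∑ l : Fin t, ((v l • g (Fin.castLE hts l)) mm.2).coeff mm.1 := by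
      intro mm
      rw [hfdef]
      rw [Finset.sum_apply]
      rw [MvPolynomial.coeff_sum]
    have hcoeM : (f M.2).coeff M.1 = (v i0).coeff α * ord.lc (g (Fin.castLE hts i0)) := by
      rw [hfapp M]
      rw [Finset.sum_eq_single i0]
      · have hexp : (v i0 • g (Fin.castLE hts i0)) M.2 = v i0 * (g (Fin.castLE hts i0)) M.2 := rfl
        rw [hexp, MvPolynomial.coeff_mul]
        rw [Finset.sum_eq_single ((α, mi.1) : (Fin n →₀ ℕ) × (Fin n →₀ ℕ))]
        · have hM2 : M.2 = mi.2 := rfl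
          rw [lc_eq ord (hmlp i0), hM2]
        · rintro ⟨x, y⟩ hbmem hbne
          by_cases hx : (v i0).coeff x = 0
          · rw [hx, zero_mul]
          by_cases hy : ((g (Fin.castLE hts i0)) M.2).coeff y = 0
          · rw [hy, mul_zero]
          exfalso
          have hxy : x + y = M.1 := Finset.HasAntidiagonal.mem_antidiagonal.1 hbmem
          have h1 := hchain i0 x y M.2 hx hy
          have h2 := (hclaim i0 x hx).1
          have h3 : ord.toOrd.le M ((x + mi.1, mi.2) : ModMon n d) := by
            have hme : ((x + y, M.2) : ModMon n d) = M := by rw [hxy]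
            rw [← hme]
            exact h1
          have h4 : ((x + mi.1, mi.2) : ModMon n d) = M :=
            ord.toOrd.le_antisymm _ _ h2 h3
          have hx1 : x = α := by
            have := congrArg Prod.fst h4
            exact add_right_cancel this
          have hy1 : y = mi.1 := by
            have h6 : M.1 = x + mi.1 := congrArg Prod.fst h4.symm
            have h5 : x + y = x + mi.1 := hxy.trans h6
            exact add_left_cancel h5
          exact hbne (by rw [hx1, hy1])
        · intro hnot
          exfalso
          apply hnot
          rw [Finset.HasAntidiagonal.mem_antidiagonal]
      · intro l _ hlne
        by_contra hne
        obtain ⟨x, y, hxy, hx, hy⟩ := hdecomp l M hne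
        have h1 := hchain l x y M.2 hx hy
        have h2 := (hclaim l x hx).1
        have h3 : ord.toOrd.le M ((x + (ml l).1, (ml l).2) : ModMon n d) := by
          have hme : ((x + y, M.2) : ModMon n d) = M := by rw [hxy]
          rw [← hme]
          exact h1
        have h4 : ((x + (ml l).1, (ml l).2) : ModMon n d) = M :=
          ord.toOrd.le_antisymm _ _ h2 h3
        exact hA l x hlne hx h4
      · intro hnot
        exact absurd (Finset.mem_univ i0) hnot
    have hvcoeff : (v i0).coeff α ≠ 0 := by
      have := mem_suppF.1 (lmo_mem ordS hmtv)
      exact this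
    have hcoeMne : (f M.2).coeff M.1 ≠ 0 := by
      rw [hcoeM]
      exact mul_ne_zero hvcoeff (lc_ne_zero ord (hmlp i0))
    have hfne : f ≠ 0 := by
      intro h0
      rw [h0] at hcoeMne
      exact hcoeMne rfl
    have hbound : ∀ mm ∈ suppF f, ord.toOrd.le mm M := by
      intro mm hmm
      rw [mem_suppF] at hmm
      rw [hfapp mm] at hmm
      obtain ⟨l, _, hlne⟩ := Finset.exists_ne_zero_of_sum_ne_zero hmm
      obtain ⟨x, y, hxy, hx, hy⟩ := hdecomp l mm hlne
      have h1 := hchain l x y mm.2 hx hy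
      have h2 := (hclaim l x hx).1
      have h3 : ord.toOrd.le mm ((x + (ml l).1, (ml l).2) : ModMon n d) := by
        have hme : ((x + y, mm.2) : ModMon n d) = mm := by rw [hxy]
        rw [← hme]
        exact h1
      exact leO_trans ord h3 h2
    have hlmof : ord.lmo f = (M : WithBot (ModMon n d)) :=
      lmo_eq_of ord (mem_suppF.2 hcoeMne) hbound
    have hlmVecf : ord.lmVec f = mmVec M := lmVec_eq ord hlmof
    have hmem : (mmVec M : FreeMod k n d) ∈ ord.lmSub U := by
      rw [← hlmVecf]
      exact lmVec_mem_lmSub ord hvU hfne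
    rw [← hGU2] at hmem
    obtain ⟨m'', hm''mem, hm''2, hm''1⟩ := span_monomials_dvd
      (S := ord.lmVec '' ((((Finset.univ : Finset (Fin s)).filter
          fun i : Fin s => t ≤ i.val).image g : Finset (FreeMod k n d)) : Set (FreeMod k n d)))
      (by
        rintro u ⟨w, hw, rfl⟩
        by_cases hw0 : w = 0
        · exact Or.inl (lmVec_eq_zero ord hw0)
        · obtain ⟨mw, hmw⟩ := lmo_exists ord hw0
          exact Or.inr ⟨mw, lmVec_eq ord hmw⟩) hmem
    obtain ⟨w, hwmem, hweq⟩ := hm''mem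
    obtain ⟨j, hjmem, hjw⟩ := Finset.mem_image.1 hwmem
    have hjt : t ≤ j.val := (Finset.mem_filter.1 hjmem).2
    have hw0 : w ≠ 0 := by
      intro h0
      rw [h0, lmVec_eq_zero ord (f := (0 : FreeMod k n d)) rfl] at hweq
      exact mmVec_ne_zero m'' hweq.symm
    obtain ⟨mj0, hmj0⟩ := lmo_exists ord hw0
    have hmj0m : mj0 = m'' := by
      apply mmVec_inj (k := k)
      rw [← lmVec_eq ord hmj0, hweq]
    subst hmj0m
    have hij : Fin.castLE hts i0 < j := by
      show (Fin.castLE hts i0).val < j.val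
      calc (Fin.castLE hts i0).val < t := hit
      _ ≤ j.val := hjt
    have hlmoj : ord.lmo (g j) = (mj0 : WithBot (ModMon n d)) := by
      rw [hjw]; exact hmj0
    have hcomp : mi.2 = mj0.2 := by
      rw [hm''2]
    have hγle : mi.1 ⊔ mj0.1 ≤ α + mi.1 := by
      apply sup_le
      · exact self_le_add_left mi.1 α
      · exact hm''1
    exact finish j mj0 hij hlmoj hcomp hγle

lemma sum_single_smul {i : Fin s} (q : MvPolynomial (Fin n) k) :
    (∑ w : Fin s, (Pi.single (M := fun _ : Fin s => MvPolynomial (Fin n) k) i q) w • g w)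
      = q • g i := by
  rw [Finset.sum_eq_single i]
  · rw [Pi.single_eq_same]
  · intro w _ hw
    rw [Pi.single_eq_of_ne hw, zero_smul]
  · intro h
    exact absurd (Finset.mem_univ i) h

lemma schreyer_syz
    (U : Submodule (MvPolynomial (Fin n) k) (FreeMod k n d))
    (hGU1 : Submodule.span (MvPolynomial (Fin n) k)
        (((((Finset.univ : Finset (Fin s)).filter fun i : Fin s => t ≤ i.val).image g :
          Finset (FreeMod k n d))) : Set (FreeMod k n d)) = U)
    {i j : Fin s} (hij : i < j)
    (hrep : sPoly ord (g i) (g j) = ∑ l, a i j l • g l) :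
    (∑ l : Fin t, schreyerVec ord g a i j (Fin.castLE hts l) • g (Fin.castLE hts l)) ∈ U := by
  classical
  have hUrest : ∀ w : Fin s, t ≤ w.val → g w ∈ U := by
    intro w hw
    rw [← hGU1]
    apply Submodule.subset_span
    exact Finset.mem_coe.2 (Finset.mem_image_of_mem g (Finset.mem_filter.2 ⟨Finset.mem_univ w, hw⟩))
  -- full sum vanishes
  have hfull : (∑ w : Fin s, schreyerVec ord g a i j w • g w) = 0 := by
    cases hlmi : ord.lmo (g i) with
    | bot =>
      have hz : schreyerVec ord g a i j = 0 := by
        rw [schreyerVec, hlmi]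
        rfl
      rw [hz]
      simp
    | coe mi =>
      cases hlmj : ord.lmo (g j) with
      | bot =>
        have hz : schreyerVec ord g a i j = 0 := by
          rw [schreyerVec, hlmi, hlmj]
          rfl
        rw [hz]
        simp
      | coe mj =>
        by_cases hcomp : mi.2 = mj.2
        · have hsv : schreyerVec ord g a i j
              = Pi.single (M := fun _ : Fin s => MvPolynomial (Fin n) k) i
                  (MvPolynomial.monomial ((mi.1 ⊔ mj.1) - mi.1) (ord.lc (g i))⁻¹)
                - Pi.single (M := fun _ : Fin s => MvPolynomial (Fin n) k) j
                  (MvPolynomial.monomial ((mi.1 ⊔ mj.1) - mj.1) (ord.lc (g j))⁻¹)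
                - (fun l => a i j l) := by
            rw [schreyerVec, hlmi, hlmj]
            simp only [WithBot.recBotCoe_coe]
            rw [if_pos hcomp]
          have hsp : sPoly ord (g i) (g j)
              = (MvPolynomial.monomial ((mi.1 ⊔ mj.1) - mi.1) (ord.lc (g i))⁻¹) • g i
                - (MvPolynomial.monomial ((mi.1 ⊔ mj.1) - mj.1) (ord.lc (g j))⁻¹) • g j := by
            rw [sPoly, hlmi, hlmj]
            simp only [WithBot.recBotCoe_coe]
            rw [if_pos hcomp]
          rw [hsv]
          have hexpand : ∀ w : Fin s,
              ((Pi.single (M := fun _ : Fin s => MvPolynomial (Fin n) k) i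
                  (MvPolynomial.monomial ((mi.1 ⊔ mj.1) - mi.1) (ord.lc (g i))⁻¹)
                - Pi.single (M := fun _ : Fin s => MvPolynomial (Fin n) k) j
                  (MvPolynomial.monomial ((mi.1 ⊔ mj.1) - mj.1) (ord.lc (g j))⁻¹)
                - (fun l => a i j l)) w) • g w
              = (Pi.single (M := fun _ : Fin s => MvPolynomial (Fin n) k) i
                  (MvPolynomial.monomial ((mi.1 ⊔ mj.1) - mi.1) (ord.lc (g i))⁻¹)) w • g w
                - (Pi.single (M := fun _ : Fin s => MvPolynomial (Fin n) k) j
                  (MvPolynomial.monomial ((mi.1 ⊔ mj.1) - mj.1) (ord.lc (g j))⁻¹)) w • g w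
                - a i j w • g w := by
            intro w
            simp only [Pi.sub_apply]
            rw [sub_smul, sub_smul]
          rw [Finset.sum_congr rfl (fun w _ => hexpand w)]
          rw [Finset.sum_sub_distrib, Finset.sum_sub_distrib]
          rw [sum_single_smul g, sum_single_smul g, ← hrep, hsp]
          abel
        · have hz : schreyerVec ord g a i j = 0 := by
            rw [schreyerVec, hlmi, hlmj]
            simp only [WithBot.recBotCoe_coe]
            rw [if_neg hcomp]
          rw [hz]
          simp
  -- reindex the partial sum
  have hTim : Finset.image (Fin.castLE hts) Finset.univ
      = Finset.univ.filter (fun w : Fin s => w.val < t) := by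
    ext w
    simp only [Finset.mem_image, Finset.mem_filter, Finset.mem_univ, true_and]
    constructor
    · rintro ⟨l, rfl⟩
      exact l.isLt
    · intro hw
      exact ⟨⟨w.val, hw⟩, Fin.ext rfl⟩
  set F : Fin s → FreeMod k n d := fun w => schreyerVec ord g a i j w • g w with hF
  have hre : (∑ l : Fin t, F (Fin.castLE hts l))
      = ∑ w ∈ Finset.univ.filter (fun w : Fin s => w.val < t), F w := by
    rw [← hTim, Finset.sum_image]
    intro x _ y _ hxy
    exact Fin.castLE_injective hts hxy
  have hsplit := Finset.sum_filter_add_sum_filter_not Finset.univ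
    (fun w : Fin s => w.val < t) F
  have hpart : (∑ l : Fin t, F (Fin.castLE hts l))
      = - ∑ w ∈ Finset.univ.filter (fun w : Fin s => ¬ w.val < t), F w := by
    rw [hre]
    have h0 : (∑ w ∈ Finset.univ.filter (fun w : Fin s => w.val < t), F w)
        + ∑ w ∈ Finset.univ.filter (fun w : Fin s => ¬ w.val < t), F w = 0 := by
      rw [hsplit]
      exact hfull
    exact eq_neg_of_add_eq_zero_left h0
  rw [show (∑ l : Fin t, schreyerVec ord g a i j (Fin.castLE hts l) • g (Fin.castLE hts l))
      = ∑ l : Fin t, F (Fin.castLE hts l) from rfl, hpart]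
  apply Submodule.neg_mem
  apply Submodule.sum_mem
  intro w hw
  have hwt : t ≤ w.val := Nat.le_of_not_lt (Finset.mem_filter.1 hw).2
  exact Submodule.smul_mem U _ (hUrest w hwt)

end SLM

end RelSchreyer

end

open RelSchreyer

/-- **Relative Schreyer's theorem.** Let `g_1, …, g_t` be the reduced Gröbner basis of `V`
relative to `U` and `g_{t+1}, …, g_s` a Gröbner basis of `U`; choose standard
representations `S(g_i, g_j) = Σ_l a_{ijl} g_l`. Then the projections to the first `t`
coordinates of the Schreyer syzygies `S_{ij}` with `i < j` and `i ≤ t` form a Gröbner basis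
of `ker ψ = Syz(g_1 + U, …, g_t + U)`, where `ψ : R^t → V/U, e_i ↦ g_i + U`, with respect
to the Schreyer order `≺_G` restricted to module monomials `X^α e_i` with `i ≤ t`. -/
theorem relative_schreyer {k : Type*} [Field k] {n d s t : ℕ} (hts : t ≤ s)
    (ord : ModMonOrder n d)
    (U V : Submodule (MvPolynomial (Fin n) k) (FreeMod k n d))
    (hUV : U ≤ V)
    (g : Fin s → FreeMod k n d) (hginj : Function.Injective g)
    (hGV : IsRedRelGB ord U V
      (Finset.univ.image fun i : Fin t => g (Fin.castLE hts i)))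
    (hGU : IsGB ord U
      (((Finset.univ : Finset (Fin s)).filter fun i : Fin s => t ≤ i.val).image g))
    (a : Fin s → Fin s → Fin s → MvPolynomial (Fin n) k)
    (ha : ∀ i j : Fin s, i < j →
      sPoly ord (g i) (g j) = ∑ l, a i j l • g l ∧
        ∀ l, ord.leB (ord.lmo (a i j l • g l)) (ord.lmo (sPoly ord (g i) (g j))))
    (ordS : ModMonOrder n t)
    (hordS : ∀ (α β : Fin n →₀ ℕ) (i j : Fin t) (mi mj : ModMon n d),
      ord.lmo (g (Fin.castLE hts i)) = (mi : WithBot (ModMon n d)) →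
      ord.lmo (g (Fin.castLE hts j)) = (mj : WithBot (ModMon n d)) →
      (ordS.toOrd.lt (α, i) (β, j) ↔
        ord.toOrd.lt (α + mi.1, mi.2) (β + mj.1, mj.2) ∨
          ((α + mi.1, mi.2) = (β + mj.1, mj.2) ∧ j < i))) :
    IsGB ordS
      (Submodule.comap (combMap fun i : Fin t => g (Fin.castLE hts i)) U)
      ((((Finset.univ : Finset (Fin s × Fin s)).filter
          fun p : Fin s × Fin s => p.1 < p.2 ∧ p.1.val < t).image
        fun p => fun i : Fin t => schreyerVec ord g a p.1 p.2 (Fin.castLE hts i))) := by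
  classical
  set HH : Finset (FreeMod k n t) := (((Finset.univ : Finset (Fin s × Fin s)).filter
      fun p : Fin s × Fin s => p.1 < p.2 ∧ p.1.val < t).image
    fun p => fun i : Fin t => schreyerVec ord g a p.1 p.2 (Fin.castLE hts i)) with hHH
  set Syz : Submodule (MvPolynomial (Fin n) k) (FreeMod k n t) :=
    Submodule.comap (combMap fun i : Fin t => g (Fin.castLE hts i)) U with hSyzdef
  have hg0 : ∀ l : Fin t, g (Fin.castLE hts l) ≠ 0 := by
    intro l h0
    have hmem : g (Fin.castLE hts l)
        ∈ (Finset.univ.image fun i : Fin t => g (Fin.castLE hts i)) :=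
      Finset.mem_image_of_mem _ (Finset.mem_univ l)
    have hmem2 := hGV.1.1.1 (Finset.mem_coe.2 hmem)
    exact hmem2.2 (by rw [h0]; exact U.zero_mem)
  have hcomb : ∀ v : FreeMod k n t, (combMap fun i : Fin t => g (Fin.castLE hts i)) v
      = ∑ l : Fin t, v l • g (Fin.castLE hts l) := fun v => rfl
  have hmemHH : ∀ p : Fin s × Fin s, p.1 < p.2 → p.1.val < t →
      (fun l : Fin t => schreyerVec ord g a p.1 p.2 (Fin.castLE hts l)) ∈ HH := by
    intro p h1 h2
    exact Finset.mem_image_of_mem _ (Finset.mem_filter.2 ⟨Finset.mem_univ p, h1, h2⟩)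
  have hsub : (HH : Set (FreeMod k n t)) ⊆ (Syz : Set (FreeMod k n t)) := by
    intro x hx
    obtain ⟨p, hp, rfl⟩ := Finset.mem_image.1 (Finset.mem_coe.1 hx)
    obtain ⟨_, hp1, hp2⟩ := Finset.mem_filter.1 hp
    show _ ∈ Syz
    rw [hSyzdef, Submodule.mem_comap, hcomb]
    exact schreyer_syz ord hts g a U hGU.1 hp1 (ha p.1 p.2 hp1).1
  have hkey : ∀ (v : FreeMod k n t) (mtv : ModMon n t), v ∈ Syz →
      ordS.lmo v = (mtv : WithBot (ModMon n t)) →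
      ∃ h ∈ HH, ∃ m' : ModMon n t, ordS.lmo h = (m' : WithBot (ModMon n t)) ∧
        m'.2 = mtv.2 ∧ m'.1 ≤ mtv.1 := by
    intro v mtv hv hlmo
    have hvU : (∑ l : Fin t, v l • g (Fin.castLE hts l)) ∈ U := by
      rw [← hcomb]
      exact Submodule.mem_comap.1 hv
    obtain ⟨p, hp1, hp2, m', hlmo', hlc', hm2, hm1⟩ :=
      key_divisor ord hts g a ordS hordS hg0 ha U hGU.2 hvU hlmo
    exact ⟨_, hmemHH p hp1 hp2, m', hlmo', hm2, hm1⟩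
  have hspan_ge : ∀ (μ : ModMon n t) (v : FreeMod k n t), v ∈ Syz →
      ordS.lmo v = (μ : WithBot (ModMon n t)) →
      v ∈ Submodule.span (MvPolynomial (Fin n) k) (HH : Set (FreeMod k n t)) := by
    intro μ
    refine ordS.wf.induction
      (C := fun μ => ∀ v : FreeMod k n t, v ∈ Syz →
        ordS.lmo v = (μ : WithBot (ModMon n t)) →
        v ∈ Submodule.span (MvPolynomial (Fin n) k) (HH : Set (FreeMod k n t))) μ ?_
    intro μ IH v hv hlmo
    obtain ⟨h, hhHH, m', hlmoh, hm2, hm1⟩ := hkey v μ hv hlmo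
    have hlch : ordS.lc h ≠ 0 := lc_ne_zero ordS hlmoh
    have hc0 : ordS.lc v * (ordS.lc h)⁻¹ ≠ 0 :=
      mul_ne_zero (lc_ne_zero ordS hlmo) (inv_ne_zero hlch)
    obtain ⟨hlmoqh, hlcqh⟩ := smul_monomial_top ordS (β := μ.1 - m'.1) hc0 hlmoh
    set q : MvPolynomial (Fin n) k :=
      MvPolynomial.monomial (μ.1 - m'.1) (ordS.lc v * (ordS.lc h)⁻¹) with hq
    have hexp : μ.1 - m'.1 + m'.1 = μ.1 := tsub_add_cancel_of_le hm1
    have hlmoqh' : ordS.lmo (q • h) = (μ : WithBot (ModMon n t)) := by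
      rw [hlmoqh, hexp, hm2]
    have hlcqh' : ordS.lc (q • h) = ordS.lc v := by
      rw [hlcqh, mul_assoc, inv_mul_cancel₀ hlch, mul_one]
    have hvsub : ∀ mm ∈ suppF (v - q • h), ordS.toOrd.lt mm μ := by
      apply suppF_sub_lt ordS
      · exact fun mm hmm => le_of_mem_suppF ordS hlmo hmm
      · exact fun mm hmm => le_of_mem_suppF ordS hlmoqh' hmm
      · rw [← lc_eq ordS hlmo, ← lc_eq ordS hlmoqh', hlcqh']
    have hhSyz : h ∈ Syz := hsub (Finset.mem_coe.2 hhHH)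
    have hv'Syz : v - q • h ∈ Syz := Submodule.sub_mem _ hv (Submodule.smul_mem _ q hhSyz)
    have hhspan : h ∈ Submodule.span (MvPolynomial (Fin n) k) (HH : Set (FreeMod k n t)) :=
      Submodule.subset_span (Finset.mem_coe.2 hhHH)
    by_cases hv'0 : v - q • h = 0
    · have hveq : v = q • h := by
        rw [sub_eq_zero] at hv'0
        exact hv'0
      rw [hveq]
      exact Submodule.smul_mem _ q hhspan
    · obtain ⟨μ', hμ'⟩ := lmo_exists ordS hv'0
      have hlt : ordS.toOrd.lt μ' μ := hvsub μ' (lmo_mem ordS hμ')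
      have hrec := IH μ' hlt (v - q • h) hv'Syz hμ'
      have hvv : v = (v - q • h) + q • h := (sub_add_cancel v (q • h)).symm
      rw [hvv]
      exact Submodule.add_mem _ hrec (Submodule.smul_mem _ q hhspan)
  constructor
  · apply le_antisymm
    · exact Submodule.span_le.2 hsub
    · intro v hv
      by_cases hv0 : v = 0
      · rw [hv0]
        exact Submodule.zero_mem _
      · obtain ⟨μ, hμ⟩ := lmo_exists ordS hv0
        exact hspan_ge μ v hv hμ
  · apply le_antisymm
    · apply Submodule.span_le.2
      rintro x ⟨u, hu, rfl⟩
      by_cases hu0 : u = 0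
      · rw [lmVec_eq_zero ordS hu0]
        exact Submodule.zero_mem _
      · exact lmVec_mem_lmSub ordS (hsub hu) hu0
    · rw [ModMonOrder.lmSub]
      apply Submodule.span_le.2
      rintro x ⟨f, hf, hf0, rfl⟩
      obtain ⟨mf, hmf⟩ := lmo_exists ordS hf0
      obtain ⟨h, hhHH, m', hlmoh, hm2, hm1⟩ := hkey f mf hf hmf
      rw [lmVec_eq ordS hmf, ← mmVec_dvd hm2 hm1, ← lmVec_eq ordS hlmoh]
      exact Submodule.smul_mem _ _
        (Submodule.subset_span ⟨h, Finset.mem_coe.2 hhHH, rfl⟩)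
end

section
/- Let M be a finitely generated, finitely supported ℤ^n-graded module over R = k[X_1,…,X_n]. Then there exist s ∈ ℕ and degrees α_1,…,α_s ∈ ℤ^n together with an injective ℤ^n-graded R-module homomorphism M ↪ ⊕_{i=1}^s Σ^{α_i} E(k), where E(k) = k[X_1^{-1},…,X_n^{-1}] is the graded injective hull of k. Moreover, choosing generators of M of degrees β_1,…,β_t, there is a graded homomorphism φ : ⊕_{j=1}^t Σ^{β_j} R → ⊕_{i=1}^s Σ^{α_i} E(k) with im φ ≅ M (a flat-injective presentation of M). -/
/-- Inclusion `ℕ^n ↪ ℤ^n` of exponent vectors. -/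
noncomputable def expZ {n : ℕ} (γ : Fin n →₀ ℕ) : Fin n →₀ ℤ :=
  Finsupp.mapRange (Int.ofNat) (by simp) γ

/-- The underlying type of the graded injective hull `E(k) = k[X_1⁻¹, …, X_n⁻¹]`:
a Laurent polynomial `∑ c_γ X^{-γ}` with `γ ∈ ℕ^n` is recorded as the finitely supported
function `γ ↦ c_γ`. -/
def Ek (k : Type*) [Field k] (n : ℕ) : Type _ := (Fin n →₀ ℕ) →₀ k

noncomputable instance {k : Type*} [Field k] {n : ℕ} : AddCommGroup (Ek k n) :=
  inferInstanceAs (AddCommGroup ((Fin n →₀ ℕ) →₀ k))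

noncomputable instance {k : Type*} [Field k] {n : ℕ} : Module k (Ek k n) :=
  inferInstanceAs (Module k ((Fin n →₀ ℕ) →₀ k))

/-- The support of an element of `E(k)`: the set of `γ ∈ ℕ^n` such that the coefficient of
`X^{-γ}` is nonzero. -/
def Ek.support {k : Type*} [Field k] {n : ℕ} (f : Ek k n) : Finset (Fin n →₀ ℕ) :=
  Finsupp.support (show (Fin n →₀ ℕ) →₀ k from f)

/-- The action of the monomial `X^δ` on `E(k)`: `X^δ · X^{-γ'} = X^{-(γ'-δ)}` if `δ ≤ γ'`,
and `0` otherwise; i.e. the coefficient of `X^{-γ}` in `X^δ • f` is that of `X^{-(γ+δ)}`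
in `f`. -/
noncomputable def shiftEnd {k : Type*} [Field k] {n : ℕ} (δ : Fin n →₀ ℕ) :
    Module.End k ((Fin n →₀ ℕ) →₀ k) :=
  Finsupp.lcomapDomain (fun γ => γ + δ) (fun _ _ h => add_right_cancel h)

lemma shiftEnd_apply {k : Type*} [Field k] {n : ℕ} (δ : Fin n →₀ ℕ)
    (f : (Fin n →₀ ℕ) →₀ k) (γ : Fin n →₀ ℕ) : shiftEnd δ f γ = f (γ + δ) := rfl

/-- The multiplicative-monoid morphism sending `X^δ` to the shift operator. -/
noncomputable def shiftHom (k : Type*) [Field k] (n : ℕ) :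
    Multiplicative (Fin n →₀ ℕ) →* Module.End k ((Fin n →₀ ℕ) →₀ k) where
  toFun δ := shiftEnd (Multiplicative.toAdd δ)
  map_one' := LinearMap.ext fun f => Finsupp.ext fun γ => by
    simp [shiftEnd_apply]
  map_mul' δ ε := LinearMap.ext fun f => Finsupp.ext fun γ => by
    simp [Module.End.mul_apply, shiftEnd_apply, add_assoc]

/-- The action of `R = k[X_1, …, X_n]` on `E(k)`, as a ring morphism into endomorphisms. -/
noncomputable def EkRingHom (k : Type*) [Field k] (n : ℕ) :
    MvPolynomial (Fin n) k →+* Module.End k ((Fin n →₀ ℕ) →₀ k) :=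
  (AddMonoidAlgebra.lift k (Module.End k ((Fin n →₀ ℕ) →₀ k)) (Fin n →₀ ℕ)
    (shiftHom k n)).toRingHom

/-- The `R`-module structure on `E(k)`. -/
noncomputable instance {k : Type*} [Field k] {n : ℕ} :
    Module (MvPolynomial (Fin n) k) (Ek k n) :=
  Module.compHom ((Fin n →₀ ℕ) →₀ k) (EkRingHom k n)

/-- Homogeneity in `E(k)` shifted so that the basis element `X^{-c}` has degree `-c`:
`f` is homogeneous of degree `γ ∈ ℤ^n` iff its support consists of exponent vectors `c`
with `-c = γ`. -/
def Ek.homog {k : Type*} [Field k] {n : ℕ} (γ : Fin n →₀ ℤ) (f : Ek k n) : Prop :=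
  ∀ c ∈ Ek.support f, expZ c = -γ


section Main

variable {k : Type*} [Field k] {n : ℕ}

lemma expZ_injective : Function.Injective (expZ (n := n)) :=
  Finsupp.mapRange_injective Int.ofNat rfl (fun a b h => Int.ofNat.inj h)

/-- coefficient view of `Ek` -/
def Ek.coeff (f : Ek k n) : (Fin n →₀ ℕ) →₀ k := f

lemma Ek.ext' {f g : Ek k n} (h : ∀ γ, Ek.coeff f γ = Ek.coeff g γ) : f = g :=
  Finsupp.ext h

lemma Ek.coeff_zero {k : Type*} [Field k] {n : ℕ} (γ : Fin n →₀ ℕ) :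
    Ek.coeff (0 : Ek k n) γ = 0 := rfl

lemma Ek.coeff_add (f g : Ek k n) (γ : Fin n →₀ ℕ) :
    Ek.coeff (f + g) γ = Ek.coeff f γ + Ek.coeff g γ := rfl

lemma Ek.support_eq (f : Ek k n) : Ek.support f = (Ek.coeff f).support := rfl

lemma Ek.monomial_smul_coeff (δ : Fin n →₀ ℕ) (c : k) (f : Ek k n) (γ : Fin n →₀ ℕ) :
    Ek.coeff (((MvPolynomial.monomial δ) c : MvPolynomial (Fin n) k) • f) γ
      = c * Ek.coeff f (γ + δ) := by
  show (EkRingHom k n ((MvPolynomial.monomial δ) c) (Ek.coeff f)) γ = _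
  have h1 : ((MvPolynomial.monomial δ) c : MvPolynomial (Fin n) k)
      = AddMonoidAlgebra.single δ c := rfl
  rw [h1]
  show ((AddMonoidAlgebra.lift k _ (Fin n →₀ ℕ) (shiftHom k n))
      (AddMonoidAlgebra.single δ c) (Ek.coeff f)) γ = _
  rw [AddMonoidAlgebra.lift_single]
  simp [shiftHom, shiftEnd_apply]

lemma Ek.sum_coeff {ι : Type*} (s : Finset ι) (φ : ι → Ek k n) (γ : Fin n →₀ ℕ) :
    Ek.coeff (∑ i ∈ s, φ i) γ = ∑ i ∈ s, Ek.coeff (φ i) γ :=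
  Finsupp.finset_sum_apply s (fun i => Ek.coeff (φ i)) γ

lemma Ek.smul_coeff (p : MvPolynomial (Fin n) k) (f : Ek k n) (γ : Fin n →₀ ℕ) :
    Ek.coeff (p • f) γ
      = ∑ δ ∈ p.support, MvPolynomial.coeff δ p * Ek.coeff f (γ + δ) := by
  conv_lhs => rw [MvPolynomial.as_sum p]
  rw [Finset.sum_smul, Ek.sum_coeff]
  exact Finset.sum_congr rfl fun δ _ => Ek.monomial_smul_coeff δ _ f γ

variable {M : Type*} [AddCommGroup M]
  [Module (MvPolynomial (Fin n) k) M] [Module k M]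
  [IsScalarTower k (MvPolynomial (Fin n) k) M]

lemma rsmul_ksmul (p : MvPolynomial (Fin n) k) (c : k) (m : M) :
    p • (c • m) = c • (p • m) := by
  have h1 : c • m = (c • (1 : MvPolynomial (Fin n) k)) • m := by
    rw [smul_assoc, one_smul]
  rw [h1, smul_smul, mul_smul_comm, mul_one, smul_assoc]

lemma monomial_smul_eq (δ : Fin n →₀ ℕ) (c : k) (m : M) :
    ((MvPolynomial.monomial δ) c : MvPolynomial (Fin n) k) • m
      = c • (((MvPolynomial.monomial δ) (1:k) : MvPolynomial (Fin n) k) • m) := by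
  have : ((MvPolynomial.monomial δ) c : MvPolynomial (Fin n) k)
      = c • (MvPolynomial.monomial δ) (1:k) := by
    rw [MvPolynomial.smul_monomial, smul_eq_mul, mul_one]
  rw [this, smul_assoc]

lemma poly_smul_decomp (p : MvPolynomial (Fin n) k) (m : M) :
    p • m = ∑ δ ∈ p.support,
      (MvPolynomial.coeff δ p) •
        (((MvPolynomial.monomial δ) (1:k) : MvPolynomial (Fin n) k) • m) := by
  conv_lhs => rw [MvPolynomial.as_sum p]
  rw [Finset.sum_smul]
  exact Finset.sum_congr rfl fun δ _ => monomial_smul_eq δ _ m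

variable (𝓜 : (Fin n →₀ ℤ) → Submodule k M)

lemma finiteGamma [DecidableEq (Fin n →₀ ℤ)] [DirectSum.Decomposition 𝓜]
    (hmul : ∀ (γ : Fin n →₀ ℕ) (c : k) (β : Fin n →₀ ℤ) (m : M),
      m ∈ 𝓜 β → (MvPolynomial.monomial γ c) • m ∈ 𝓜 (β + expZ γ))
    (hsupp : {β : Fin n →₀ ℤ | 𝓜 β ≠ ⊥}.Finite) (m : M) :
    {γ : Fin n →₀ ℕ |
      ((MvPolynomial.monomial γ) (1:k) : MvPolynomial (Fin n) k) • m ≠ 0}.Finite := by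
  classical
  set D := DirectSum.decompose 𝓜 m with hD
  have hfin : (⋃ β ∈ (DFinsupp.support D : Set (Fin n →₀ ℤ)),
      (fun γ : Fin n →₀ ℕ => β + expZ γ) ⁻¹' {β' | 𝓜 β' ≠ ⊥}).Finite := by
    refine Set.Finite.biUnion (Finset.finite_toSet _) fun β _ => ?_
    refine Set.Finite.preimage ?_ hsupp
    intro a _ b _ h
    exact expZ_injective (by simpa using h)
  refine hfin.subset ?_
  intro γ hγ
  simp only [Set.mem_setOf_eq] at hγ
  have hm : m = ∑ β ∈ DFinsupp.support D, (D β : M) :=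
    (DirectSum.sum_support_decompose 𝓜 m).symm
  have hsum : ((MvPolynomial.monomial γ) (1:k) : MvPolynomial (Fin n) k) • m
      = ∑ β ∈ DFinsupp.support D,
        ((MvPolynomial.monomial γ) (1:k) : MvPolynomial (Fin n) k) • (D β : M) := by
    conv_lhs => rw [hm]
    exact Finset.smul_sum
  have : ∃ β ∈ DFinsupp.support D,
      ((MvPolynomial.monomial γ) (1:k) : MvPolynomial (Fin n) k) • (D β : M) ≠ 0 := by
    by_contra hc
    push_neg at hc
    exact hγ (by rw [hsum, Finset.sum_eq_zero hc])
  obtain ⟨β, hβ, hne⟩ := this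
  refine Set.mem_biUnion hβ ?_
  have hmem := hmul γ 1 β (D β : M) (SetLike.coe_mem _)
  simp only [Set.mem_preimage, Set.mem_setOf_eq]
  intro hbot
  rw [hbot] at hmem
  exact hne ((Submodule.mem_bot k).mp hmem)


lemma moduleFiniteK [DecidableEq (Fin n →₀ ℤ)] [DirectSum.Decomposition 𝓜]
    (hmul : ∀ (γ : Fin n →₀ ℕ) (c : k) (β : Fin n →₀ ℤ) (m : M),
      m ∈ 𝓜 β → (MvPolynomial.monomial γ c) • m ∈ 𝓜 (β + expZ γ))
    (hfg : Module.Finite (MvPolynomial (Fin n) k) M)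
    (hsupp : {β : Fin n →₀ ℤ | 𝓜 β ≠ ⊥}.Finite) :
    Module.Finite k M := by
  classical
  obtain ⟨G, hG⟩ := hfg.fg_top
  set T : Finset M := G.biUnion (fun g => ((finiteGamma 𝓜 hmul hsupp g).toFinset).image
      (fun γ => ((MvPolynomial.monomial γ) (1:k) : MvPolynomial (Fin n) k) • g)) with hT
  have hmemT : ∀ g ∈ G, ∀ γ : Fin n →₀ ℕ,
      ((MvPolynomial.monomial γ) (1:k) : MvPolynomial (Fin n) k) • g
        ∈ Submodule.span k (T : Set M) := by
    intro g hg γ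
    by_cases hz : ((MvPolynomial.monomial γ) (1:k) : MvPolynomial (Fin n) k) • g = 0
    · rw [hz]; exact Submodule.zero_mem _
    · refine Submodule.subset_span ?_
      rw [hT]
      simp only [Finset.coe_biUnion, Set.mem_iUnion, Finset.mem_coe, Finset.coe_image,
        Set.mem_image, Set.Finite.coe_toFinset, Set.mem_setOf_eq]
      exact ⟨g, hg, γ, hz, rfl⟩
  have hWmono : ∀ (δ : Fin n →₀ ℕ), ∀ x ∈ Submodule.span k (T : Set M),
      ((MvPolynomial.monomial δ) (1:k) : MvPolynomial (Fin n) k) • x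
        ∈ Submodule.span k (T : Set M) := by
    intro δ x hx
    induction hx using Submodule.span_induction with
    | mem x hxT =>
      rw [hT] at hxT
      simp only [Finset.mem_coe, Finset.mem_biUnion, Finset.mem_image,
        Set.Finite.mem_toFinset, Set.mem_setOf_eq] at hxT
      obtain ⟨g, hg, γ, _, rfl⟩ := hxT
      rw [smul_smul, MvPolynomial.monomial_mul, one_mul]
      exact hmemT g hg (δ + γ)
    | zero => rw [smul_zero]; exact Submodule.zero_mem _
    | add a b _ _ ha hb => rw [smul_add]; exact Submodule.add_mem _ ha hb
    | smul c a _ ha => rw [rsmul_ksmul]; exact Submodule.smul_mem _ _ ha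
  have hW : ∀ (p : MvPolynomial (Fin n) k), ∀ x ∈ Submodule.span k (T : Set M),
      p • x ∈ Submodule.span k (T : Set M) := by
    intro p x hx
    rw [poly_smul_decomp]
    exact Submodule.sum_mem _ fun δ _ => Submodule.smul_mem _ _ (hWmono δ x hx)
  let W' : Submodule (MvPolynomial (Fin n) k) M :=
    { carrier := (Submodule.span k (T : Set M) : Set M)
      add_mem' := fun ha hb => Submodule.add_mem _ ha hb
      zero_mem' := Submodule.zero_mem _
      smul_mem' := fun p x hx => hW p x hx }
  have hGW : (G : Set M) ⊆ W' := by
    intro g hg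
    have h0 : ((MvPolynomial.monomial (0 : Fin n →₀ ℕ)) (1:k) :
        MvPolynomial (Fin n) k) • g = g := by
      have : ((MvPolynomial.monomial (0 : Fin n →₀ ℕ)) (1:k) :
          MvPolynomial (Fin n) k) = 1 := by
        rw [MvPolynomial.monomial_zero', map_one]
      rw [this, one_smul]
    have := hmemT g hg 0
    rw [h0] at this
    exact this
  have htop : Submodule.span k (T : Set M) = ⊤ := by
    rw [Submodule.eq_top_iff']
    intro x
    have hx : x ∈ (⊤ : Submodule (MvPolynomial (Fin n) k) M) := Submodule.mem_top
    rw [← hG] at hx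
    exact (Submodule.span_le (p := W')).mpr hGW hx
  exact ⟨⟨T, htop⟩⟩

lemma mono_mul_smul (γ : Fin n →₀ ℕ) (p : MvPolynomial (Fin n) k) (m : M) :
    (((MvPolynomial.monomial γ) (1:k) : MvPolynomial (Fin n) k) * p) • m
      = ∑ δ ∈ p.support, (MvPolynomial.coeff δ p) •
          (((MvPolynomial.monomial (γ + δ)) (1:k) : MvPolynomial (Fin n) k) • m) := by
  conv_lhs => rw [MvPolynomial.as_sum p]
  rw [Finset.mul_sum, Finset.sum_smul]
  refine Finset.sum_congr rfl fun δ _ => ?_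
  rw [MvPolynomial.monomial_mul, one_mul, monomial_smul_eq]

noncomputable def Phi [DecidableEq (Fin n →₀ ℤ)] [DirectSum.Decomposition 𝓜]
    (hmul : ∀ (γ : Fin n →₀ ℕ) (c : k) (β : Fin n →₀ ℤ) (m : M),
      m ∈ 𝓜 β → (MvPolynomial.monomial γ c) • m ∈ 𝓜 (β + expZ γ))
    (hsupp : {β : Fin n →₀ ℤ | 𝓜 β ≠ ⊥}.Finite) (lam : M →ₗ[k] k) :
    M →ₗ[MvPolynomial (Fin n) k] Ek k n where
  toFun m := Finsupp.ofSupportFinite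
    (fun γ => lam (((MvPolynomial.monomial γ) (1:k) : MvPolynomial (Fin n) k) • m))
    (Set.Finite.subset (finiteGamma 𝓜 hmul hsupp m) (by
      intro γ hγ
      simp only [Function.mem_support] at hγ
      simp only [Set.mem_setOf_eq]
      intro h0
      exact hγ (by rw [h0, map_zero])))
  map_add' m m' := Finsupp.ext fun γ => by
    erw [Finsupp.add_apply]
    simp only [Finsupp.ofSupportFinite_coe]
    rw [smul_add, map_add]
  map_smul' p m := Finsupp.ext fun γ => by
    simp only [RingHom.id_apply]
    erw [Ek.smul_coeff p _ γ]
    simp only [Finsupp.ofSupportFinite_coe]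
    show lam _ = _
    rw [smul_smul, mono_mul_smul, map_sum]
    refine Finset.sum_congr rfl fun δ _ => ?_
    rw [map_smul, smul_eq_mul]
    rfl

lemma Phi_coeff [DecidableEq (Fin n →₀ ℤ)] [DirectSum.Decomposition 𝓜]
    (hmul : ∀ (γ : Fin n →₀ ℕ) (c : k) (β : Fin n →₀ ℤ) (m : M),
      m ∈ 𝓜 β → (MvPolynomial.monomial γ c) • m ∈ 𝓜 (β + expZ γ))
    (hsupp : {β : Fin n →₀ ℤ | 𝓜 β ≠ ⊥}.Finite) (lam : M →ₗ[k] k) (m : M)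
    (γ : Fin n →₀ ℕ) :
    Ek.coeff (Phi 𝓜 hmul hsupp lam m) γ
      = lam (((MvPolynomial.monomial γ) (1:k) : MvPolynomial (Fin n) k) • m) := rfl

lemma Phi_coeff_zero [DecidableEq (Fin n →₀ ℤ)] [DirectSum.Decomposition 𝓜]
    (hmul : ∀ (γ : Fin n →₀ ℕ) (c : k) (β : Fin n →₀ ℤ) (m : M),
      m ∈ 𝓜 β → (MvPolynomial.monomial γ c) • m ∈ 𝓜 (β + expZ γ))
    (hsupp : {β : Fin n →₀ ℤ | 𝓜 β ≠ ⊥}.Finite) (lam : M →ₗ[k] k) (m : M) :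
    Ek.coeff (Phi 𝓜 hmul hsupp lam m) 0 = lam m := by
  rw [Phi_coeff]
  have : ((MvPolynomial.monomial (0 : Fin n →₀ ℕ)) (1:k) :
      MvPolynomial (Fin n) k) = 1 := by rw [MvPolynomial.monomial_zero', map_one]
  rw [this, one_smul]

end Main

set_option maxHeartbeats 1000000

/-- Every finitely generated, finitely supported `ℤ^n`-graded module `M` over
`R = k[X_1, …, X_n]` embeds, via an injective graded `R`-homomorphism, into a finite direct
sum `⊕_i Σ^{α_i} E(k)` of shifted copies of the graded injective hull
`E(k) = k[X_1⁻¹, …, X_n⁻¹]` of `k`; and for any chosen homogeneous generators of `M` of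
degrees `β_1, …, β_t` there is a graded homomorphism
`φ : ⊕_j Σ^{β_j} R → ⊕_i Σ^{α_i} E(k)` with `im φ ≅ M` (a flat-injective presentation). -/
theorem exists_flat_injective_presentation {k : Type*} [Field k] {n : ℕ}
    {M : Type*} [AddCommGroup M]
    [Module (MvPolynomial (Fin n) k) M] [Module k M]
    [IsScalarTower k (MvPolynomial (Fin n) k) M]
    (𝓜 : (Fin n →₀ ℤ) → Submodule k M)
    (hdir : DirectSum.IsInternal 𝓜)
    (hmul : ∀ (γ : Fin n →₀ ℕ) (c : k) (β : Fin n →₀ ℤ) (m : M),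
      m ∈ 𝓜 β → (MvPolynomial.monomial γ c) • m ∈ 𝓜 (β + expZ γ))
    (hfg : Module.Finite (MvPolynomial (Fin n) k) M)
    (hsupp : {β : Fin n →₀ ℤ | 𝓜 β ≠ ⊥}.Finite) :
    (∃ (s : ℕ) (α : Fin s → (Fin n →₀ ℤ))
        (ι : M →ₗ[MvPolynomial (Fin n) k] (Fin s → Ek k n)),
      Function.Injective ι ∧
        ∀ (γ : Fin n →₀ ℤ) (m : M), m ∈ 𝓜 γ → ∀ i, Ek.homog (γ - α i) (ι m i)) ∧
    ∀ (t : ℕ) (β : Fin t → (Fin n →₀ ℤ)) (g : Fin t → M),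
      (∀ j, g j ∈ 𝓜 (β j)) →
      Submodule.span (MvPolynomial (Fin n) k) (Set.range g) = ⊤ →
      ∃ (s : ℕ) (α : Fin s → (Fin n →₀ ℤ))
        (φ : (Fin t → MvPolynomial (Fin n) k) →ₗ[MvPolynomial (Fin n) k]
          (Fin s → Ek k n)),
        (∀ (γ : Fin n →₀ ℤ) (v : Fin t → MvPolynomial (Fin n) k),
          (∀ j, ∀ m ∈ (v j).support, expZ m = γ - β j) →
          ∀ i, Ek.homog (γ - α i) (φ v i)) ∧
        Nonempty ((LinearMap.range φ) ≃ₗ[MvPolynomial (Fin n) k] M) := by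
  classical
  haveI : DirectSum.Decomposition 𝓜 := hdir.chooseDecomposition 𝓜
  haveI hfk : Module.Finite k M := moduleFiniteK 𝓜 hmul hfg hsupp
  haveI : FiniteDimensional k M := hfk
  let proj : ∀ β : Fin n →₀ ℤ, M →ₗ[k] (𝓜 β) := fun β =>
    { toFun := fun m => DirectSum.decompose 𝓜 m β
      map_add' := fun a b => by
        show (DirectSum.decompose 𝓜 (a + b)) β = _
        rw [DirectSum.decompose_add]
        rfl
      map_smul' := fun c a => by
        show (DirectSum.decompose 𝓜 (c • a)) β
            = (RingHom.id k) c • (DirectSum.decompose 𝓜 a) β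
        rw [DirectSum.decompose_smul]
        rfl }
  let d : (Fin n →₀ ℤ) → ℕ := fun β => Module.finrank k (𝓜 β)
  let bas : ∀ β, Module.Basis (Fin (d β)) k (𝓜 β) := fun β => Module.finBasis k (𝓜 β)
  let lamF : ∀ β : Fin n →₀ ℤ, Fin (d β) → (M →ₗ[k] k) := fun β r =>
    ((bas β).coord r) ∘ₗ proj β
  have hproj_ne : ∀ β β' : Fin n →₀ ℤ, β' ≠ β → ∀ m ∈ 𝓜 β', proj β m = 0 := by
    intro β β' hne m hm
    have : ((DirectSum.decompose 𝓜 m β : 𝓜 β) : M) = 0 :=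
      DirectSum.decompose_of_mem_ne 𝓜 hm hne
    exact Subtype.ext this
  have hvanish : ∀ β β' : Fin n →₀ ℤ, β' ≠ β → ∀ m ∈ 𝓜 β', ∀ r, lamF β r m = 0 := by
    intro β β' hne m hm r
    show (bas β).coord r (proj β m) = 0
    rw [hproj_ne β β' hne m hm, map_zero]
  have hsep : ∀ m : M, (∀ β ∈ hsupp.toFinset, ∀ r, lamF β r m = 0) → m = 0 := by
    intro m h
    have hproj0 : ∀ β, DirectSum.decompose 𝓜 m β = 0 := by
      intro β
      by_cases hβ : 𝓜 β ≠ ⊥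
      · have hr : ∀ r, (bas β).coord r (proj β m) = 0 := fun r =>
          h β (hsupp.mem_toFinset.mpr hβ) r
        have h0 : (bas β).repr (proj β m) = 0 :=
          Finsupp.ext fun r => by simpa [Module.Basis.coord_apply] using hr r
        exact (bas β).repr.map_eq_zero_iff.mp h0
      · push_neg at hβ
        have h2 := (DirectSum.decompose 𝓜 m β).2
        have h3 : ((DirectSum.decompose 𝓜 m β : 𝓜 β) : M) ∈ (⊥ : Submodule k M) := by
          rw [← hβ]; exact h2
        exact Subtype.ext ((Submodule.mem_bot k).mp h3)
    have hmm := DirectSum.sum_support_decompose 𝓜 m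
    rw [← hmm]
    refine Finset.sum_eq_zero fun β _ => ?_
    rw [hproj0 β]
    rfl
  let I := (β : {x // x ∈ hsupp.toFinset}) × Fin (d β.1)
  obtain ⟨s, ⟨e⟩⟩ : ∃ s : ℕ, Nonempty (Fin s ≃ I) :=
    ⟨Fintype.card I, ⟨(Fintype.equivFin I).symm⟩⟩
  let lam' : I → (M →ₗ[k] k) := fun x => lamF x.1.1 x.2
  let lam : Fin s → (M →ₗ[k] k) := fun i => lam' (e i)
  let α : Fin s → (Fin n →₀ ℤ) := fun i => (e i).1.1
  let ι : M →ₗ[MvPolynomial (Fin n) k] (Fin s → Ek k n) :=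
    LinearMap.pi (fun i => Phi 𝓜 hmul hsupp (lam i))
  have hιi : ∀ (m : M) (i : Fin s), ι m i = Phi 𝓜 hmul hsupp (lam i) m :=
    fun m i => LinearMap.pi_apply _ _ _
  have hinj : Function.Injective ι := by
    rw [injective_iff_map_eq_zero]
    intro m hm
    refine hsep m ?_
    intro β hβ r
    have h : ι m (e.symm ⟨⟨β, hβ⟩, r⟩) = 0 := by rw [hm]; rfl
    have h2 := congrArg (fun f => Ek.coeff f 0) h
    simp only [hιi, Phi_coeff_zero, Ek.coeff_zero] at h2
    unfold lam lam' at h2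
    beta_reduce at h2
    rw [e.apply_symm_apply] at h2
    exact h2
  have hhom : ∀ (γ : Fin n →₀ ℤ) (m : M), m ∈ 𝓜 γ → ∀ i,
      Ek.homog (γ - α i) (ι m i) := by
    intro γ m hmγ i c hc
    rw [hιi, Ek.support_eq, Finsupp.mem_support_iff, Phi_coeff] at hc
    have hmem := hmul c 1 γ m hmγ
    by_cases heq : γ + expZ c = α i
    · rw [← heq]; abel
    · exact absurd (hvanish (α i) (γ + expZ c) heq _ hmem ((e i).2)) hc
  refine ⟨⟨s, α, ι, hinj, hhom⟩, ?_⟩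
  intro t β g hgdeg hgspan
  let π : (Fin t → MvPolynomial (Fin n) k) →ₗ[MvPolynomial (Fin n) k] M :=
    { toFun := fun v => ∑ j, v j • g j
      map_add' := fun u v => by
        simp [add_smul, Finset.sum_add_distrib]
      map_smul' := fun p v => by
        simp only [Pi.smul_apply, smul_eq_mul, mul_smul, RingHom.id_apply]
        rw [Finset.smul_sum] }
  have hπv : ∀ v, π v = ∑ j, v j • g j := fun v => rfl
  have hπsurj : Function.Surjective π := by
    have hrange : ∀ j, g j ∈ LinearMap.range π := by
      intro j
      refine ⟨Pi.single j 1, ?_⟩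
      rw [hπv, Finset.sum_eq_single j]
      · rw [Pi.single_eq_same, one_smul]
      · intro j' _ hj'
        rw [Pi.single_eq_of_ne hj', zero_smul]
      · intro h
        exact absurd (Finset.mem_univ j) h
    intro m
    have hle : Submodule.span (MvPolynomial (Fin n) k) (Set.range g)
        ≤ LinearMap.range π :=
      Submodule.span_le.mpr (by rintro x ⟨j, rfl⟩; exact hrange j)
    exact hle (hgspan ▸ Submodule.mem_top)
  refine ⟨s, α, ι.comp π, ?_, ?_⟩
  · intro γ v hv i
    have hπmem : π v ∈ 𝓜 γ := by
      rw [hπv]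
      refine Submodule.sum_mem _ fun j _ => ?_
      rw [poly_smul_decomp]
      refine Submodule.sum_mem _ fun δ hδ => ?_
      refine Submodule.smul_mem _ _ ?_
      have hmem := hmul δ 1 (β j) (g j) (hgdeg j)
      rw [hv j δ hδ, show β j + (γ - β j) = γ by abel] at hmem
      exact hmem
    exact hhom γ (π v) hπmem i
  · have hr : LinearMap.range (ι.comp π) = LinearMap.range ι := by
      rw [LinearMap.range_comp, LinearMap.range_eq_top.mpr hπsurj, Submodule.map_top]
    rw [hr]
    exact ⟨(LinearEquiv.ofInjective ι hinj).symm⟩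
end
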